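/- arXiv:2605.16095 — 9 statements merged into one kernel-verified Lean document; each statement's English description precedes it below -/
import Mathlib

section
/- Let f ∈ C¹([-1,0]) and ω > 0. Then ∫_{-1}^{0} (-z)^{2ω-1} f(z)² dz ≤ (1/ω) f(-1)² + (1/ω²) ∫_{-1}^{0} (-z)^{2ω+1} (f'(z))² dz. -/
open MeasureTheory Set Filter Topology

lemma aux_pointwise (ω t a b : ℝ) (hω : 0 < ω) (ht : 0 < t) :
    t ^ (2*ω) * a * b ≤ ω/2 * (t ^ (2*ω - 1) * a^2) + 1/(2*ω) * (t ^ (2*ω + 1) * b^2) := by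
  have e1 : t ^ (2*ω - 1) = t ^ (2*ω) / t := by
    rw [Real.rpow_sub ht, Real.rpow_one]
  have e2 : t ^ (2*ω + 1) = t ^ (2*ω) * t := by
    rw [Real.rpow_add ht, Real.rpow_one]
  have hA : 0 < t ^ (2*ω) := Real.rpow_pos_of_pos ht _
  rw [e1, e2]
  have h : 2*ω*t*(t ^ (2*ω) * a * b) ≤
      2*ω*t*(ω/2 * (t ^ (2*ω) / t * a^2) + 1/(2*ω) * (t ^ (2*ω) * t * b^2)) := by
    have hr : 2*ω*t*(ω/2 * (t ^ (2*ω) / t * a^2) + 1/(2*ω) * (t ^ (2*ω) * t * b^2))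
        = ω^2*(t ^ (2*ω)*a^2) + t^2*(t ^ (2*ω)*b^2) := by
      field_simp
    rw [hr]
    nlinarith [mul_nonneg hA.le (sq_nonneg (ω*a - t*b))]
  exact le_of_mul_le_mul_left h (by positivity)

/-- For `f ∈ C¹([-1,0])` and `ω > 0`,
`∫_{-1}^{0} (-z)^{2ω-1} f(z)² dz ≤ (1/ω) f(-1)² + (1/ω²) ∫_{-1}^{0} (-z)^{2ω+1} (f'(z))² dz`. -/
theorem stmt_0 (f f' : ℝ → ℝ) (ω : ℝ) (hω : 0 < ω)
    (hderiv : ∀ z ∈ Set.Icc (-1:ℝ) 0, HasDerivWithinAt f (f' z) (Set.Icc (-1:ℝ) 0) z)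
    (hcont : ContinuousOn f' (Set.Icc (-1:ℝ) 0)) :
    ∫ z in (-1:ℝ)..0, (-z) ^ (2*ω - 1) * (f z)^2 ≤
      (1/ω) * (f (-1))^2 + (1/ω^2) * ∫ z in (-1:ℝ)..0, (-z) ^ (2*ω + 1) * (f' z)^2 := by
  have hle : (-1:ℝ) ≤ 0 := by norm_num
  have huIcc : Set.uIcc (-1:ℝ) 0 = Set.Icc (-1:ℝ) 0 := Set.uIcc_of_le hle
  have hfc : ContinuousOn f (Set.Icc (-1:ℝ) 0) := fun z hz => (hderiv z hz).continuousWithinAt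
  -- weight integrability on [-1,0]
  have hw1 : IntervalIntegrable (fun z : ℝ => (-z) ^ (2*ω - 1)) volume (-1) 0 := by
    have h := (IntervalIntegrable.iff_comp_neg).mp
      (intervalIntegral.intervalIntegrable_rpow' (a := (1:ℝ)) (b := 0) (r := 2*ω - 1)
        (by linarith))
    simpa using h
  have hg1int : IntervalIntegrable (fun z : ℝ => (-z) ^ (2*ω - 1) * (f z)^2) volume (-1) 0 := by
    apply hw1.mul_continuousOn
    rw [huIcc]; exact hfc.pow 2
  have hwcont2 : ContinuousOn (fun z : ℝ => (-z) ^ (2*ω + 1)) (Set.Icc (-1:ℝ) 0) :=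
    (continuous_neg.continuousOn).rpow_const (fun z _ => Or.inr (by linarith))
  have hg2cont : ContinuousOn (fun z : ℝ => (-z) ^ (2*ω + 1) * (f' z)^2) (Set.Icc (-1:ℝ) 0) :=
    hwcont2.mul (hcont.pow 2)
  have hg2int : IntervalIntegrable (fun z : ℝ => (-z) ^ (2*ω + 1) * (f' z)^2) volume (-1) 0 := by
    apply ContinuousOn.intervalIntegrable; rw [huIcc]; exact hg2cont
  -- main estimate for each x < 0
  have hmain : ∀ x ∈ Set.Ico (-1:ℝ) 0,
      (∫ z in (-1:ℝ)..x, (-z) ^ (2*ω - 1) * (f z)^2) ≤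
        (1/ω) * (f (-1))^2 + (1/ω^2) * ∫ z in (-1:ℝ)..0, (-z) ^ (2*ω + 1) * (f' z)^2 := by
    rintro x ⟨hx1, hx0⟩
    have hsub : Set.Icc (-1:ℝ) x ⊆ Set.Icc (-1:ℝ) 0 := Set.Icc_subset_Icc le_rfl hx0.le
    have huIccx : Set.uIcc (-1:ℝ) x = Set.Icc (-1:ℝ) x := Set.uIcc_of_le hx1
    have hw1contx : ContinuousOn (fun z : ℝ => (-z) ^ (2*ω - 1)) (Set.Icc (-1:ℝ) x) :=
      (continuous_neg.continuousOn).rpow_const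
        (fun z hz => Or.inl (ne_of_gt (by have := hz.2; linarith)))
    have hw0contx : ContinuousOn (fun z : ℝ => (-z) ^ (2*ω)) (Set.Icc (-1:ℝ) x) :=
      (continuous_neg.continuousOn).rpow_const (fun z _ => Or.inr (by linarith))
    have hfcx : ContinuousOn f (Set.Icc (-1:ℝ) x) := hfc.mono hsub
    have hfcx' : ContinuousOn f' (Set.Icc (-1:ℝ) x) := hcont.mono hsub
    -- FTC on [-1, x]
    have hG : ∀ z ∈ Set.Ioo (-1:ℝ) x,
        HasDerivAt (fun z => -(1/(2*ω)) * (-z) ^ (2*ω) * (f z)^2)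
          ((-z) ^ (2*ω - 1) * (f z)^2 - (1/ω) * ((-z) ^ (2*ω) * (f z * f' z))) z := by
      rintro z ⟨hz1, hz2⟩
      have hz0 : z < 0 := lt_trans hz2 hx0
      have hfz : HasDerivAt f (f' z) z :=
        (hderiv z ⟨hz1.le, hz0.le⟩).hasDerivAt (Icc_mem_nhds hz1 hz0)
      have hneg : HasDerivAt (fun z : ℝ => -z) (-1) z := (hasDerivAt_id z).neg
      have hp : HasDerivAt (fun z : ℝ => (-z) ^ (2*ω)) ((2*ω * (-z) ^ (2*ω - 1)) * (-1)) z :=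
        (Real.hasDerivAt_rpow_const (p := 2*ω)
          (Or.inl (ne_of_gt (by linarith : (0:ℝ) < -z)))).comp z hneg
      have hd := (hp.const_mul (-(1/(2*ω)))).fun_mul (hfz.fun_pow 2)
      refine hd.congr_deriv ?_
      have hωne : ω ≠ 0 := hω.ne'
      field_simp
      ring
    have hcontG : ContinuousOn (fun z => -(1/(2*ω)) * (-z) ^ (2*ω) * (f z)^2)
        (Set.Icc (-1:ℝ) x) :=
      ((continuousOn_const.mul hw0contx).mul (hfcx.pow 2))
    have hg1intx : IntervalIntegrable (fun z : ℝ => (-z) ^ (2*ω - 1) * (f z)^2)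
        volume (-1) x := by
      apply ContinuousOn.intervalIntegrable; rw [huIccx]; exact hw1contx.mul (hfcx.pow 2)
    have hhintx : IntervalIntegrable (fun z : ℝ => (-z) ^ (2*ω) * (f z * f' z))
        volume (-1) x := by
      apply ContinuousOn.intervalIntegrable; rw [huIccx]
      exact hw0contx.mul (hfcx.mul hfcx')
    have hg2intx : IntervalIntegrable (fun z : ℝ => (-z) ^ (2*ω + 1) * (f' z)^2)
        volume (-1) x := by
      apply ContinuousOn.intervalIntegrable; rw [huIccx]; exact hg2cont.mono hsub
    have hDint : IntervalIntegrable
        (fun z => (-z) ^ (2*ω - 1) * (f z)^2 - (1/ω) * ((-z) ^ (2*ω) * (f z * f' z)))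
        volume (-1) x := hg1intx.sub (hhintx.const_mul (1/ω))
    have hftc : (∫ z in (-1:ℝ)..x,
          ((-z) ^ (2*ω - 1) * (f z)^2 - (1/ω) * ((-z) ^ (2*ω) * (f z * f' z)))) =
        (-(1/(2*ω)) * (-x) ^ (2*ω) * (f x)^2) -
          (-(1/(2*ω)) * (-(-1:ℝ)) ^ (2*ω) * (f (-1))^2) :=
      intervalIntegral.integral_eq_sub_of_hasDeriv_right_of_le hx1 hcontG
        (fun z hz => (hG z hz).hasDerivWithinAt) hDint
    rw [intervalIntegral.integral_sub hg1intx (hhintx.const_mul (1/ω)),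
      intervalIntegral.integral_const_mul] at hftc
    -- notation
    set I := ∫ z in (-1:ℝ)..x, (-z) ^ (2*ω - 1) * (f z)^2 with hI
    set M := ∫ z in (-1:ℝ)..x, (-z) ^ (2*ω) * (f z * f' z) with hM
    set Jx := ∫ z in (-1:ℝ)..x, (-z) ^ (2*ω + 1) * (f' z)^2 with hJx
    set J := ∫ z in (-1:ℝ)..0, (-z) ^ (2*ω + 1) * (f' z)^2 with hJ
    -- pointwise bound and integral monotonicity
    have hptw : ∀ z ∈ Set.Icc (-1:ℝ) x, (-z) ^ (2*ω) * (f z * f' z) ≤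
        ω/2 * ((-z) ^ (2*ω - 1) * (f z)^2) + 1/(2*ω) * ((-z) ^ (2*ω + 1) * (f' z)^2) := by
      intro z hz
      have ht : 0 < -z := by have := hz.2; linarith
      have h := aux_pointwise ω (-z) (f z) (f' z) hω ht
      have e : (-z) ^ (2*ω) * (f z * f' z) = (-z) ^ (2*ω) * f z * f' z := by ring
      rw [e]; exact h
    have hMbound : M ≤ ω/2 * I + 1/(2*ω) * Jx := by
      have hmono := intervalIntegral.integral_mono_on hx1 hhintx
        ((hg1intx.const_mul (ω/2)).add (hg2intx.const_mul (1/(2*ω)))) hptw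
      rw [intervalIntegral.integral_add (hg1intx.const_mul (ω/2))
        (hg2intx.const_mul (1/(2*ω))), intervalIntegral.integral_const_mul,
        intervalIntegral.integral_const_mul] at hmono
      exact hmono
    -- Jx ≤ J
    have hJxJ : Jx ≤ J := by
      have hadj : Jx + (∫ z in x..(0:ℝ), (-z) ^ (2*ω + 1) * (f' z)^2) = J :=
        intervalIntegral.integral_add_adjacent_intervals
          (hg2int.mono_set (by rw [huIccx, huIcc]; exact hsub))
          (hg2int.mono_set (by rw [huIcc, Set.uIcc_of_le hx0.le]; exact Set.Icc_subset_Icc hx1 le_rfl))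
      have htail : 0 ≤ ∫ z in x..(0:ℝ), (-z) ^ (2*ω + 1) * (f' z)^2 := by
        apply intervalIntegral.integral_nonneg hx0.le
        intro u hu
        exact mul_nonneg (Real.rpow_nonneg (by have := hu.2; linarith) _) (sq_nonneg _)
      linarith
    -- boundary terms
    have hGx : -(1/(2*ω)) * (-x) ^ (2*ω) * (f x)^2 ≤ 0 := by
      have h1 : 0 ≤ (-x) ^ (2*ω) := Real.rpow_nonneg (by linarith) _
      have h2 : 0 ≤ (1/(2*ω)) * ((-x) ^ (2*ω) * (f x)^2) := by positivity
      nlinarith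
    have hGm1 : -(1/(2*ω)) * (-(-1:ℝ)) ^ (2*ω) * (f (-1))^2 = -(1/(2*ω)) * (f (-1))^2 := by
      norm_num [Real.one_rpow]
    rw [hGm1] at hftc
    -- assemble
    have hcω : (1/ω) * ω = 1 := by field_simp
    have hMmul : (1/ω) * M ≤ (1/ω) * (ω/2 * I + 1/(2*ω) * J) := by
      have hmul2 : 1/(2*ω) * Jx ≤ 1/(2*ω) * J :=
        mul_le_mul_of_nonneg_left hJxJ (by positivity)
      have : M ≤ ω/2 * I + 1/(2*ω) * J := by linarith
      exact mul_le_mul_of_nonneg_left this (by positivity)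
    have heq : (1/ω) * (ω/2 * I + 1/(2*ω) * J) = I/2 + (1/(2*ω^2)) * J := by
      field_simp
    have hfin : I ≤ (1/ω) * (f (-1))^2 + (1/ω^2) * J := by
      have e2 : (1/(2*ω^2)) * J = (1/2) * ((1/ω^2) * J) := by ring
      have e3 : (1/(2*ω)) * (f (-1))^2 = (1/2) * ((1/ω) * (f (-1))^2) := by
        rw [one_div, one_div]; ring
      nlinarith [hftc, hMmul, heq, hGx]
    exact hfin
  -- take the limit x → 0⁻
  have hprim : ContinuousOn (fun x => ∫ z in (-1:ℝ)..x, (-z) ^ (2*ω - 1) * (f z)^2)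
      (Set.uIcc (-1:ℝ) 0) :=
    intervalIntegral.continuousOn_primitive_interval' hg1int Set.left_mem_uIcc
  have hmemIcc : Set.uIcc (-1:ℝ) 0 ∈ 𝓝[<] (0:ℝ) := by
    rw [huIcc]
    exact Filter.mem_of_superset
      (Ioo_mem_nhdsLT_of_mem (⟨by norm_num, le_refl (0:ℝ)⟩ : (0:ℝ) ∈ Set.Ioc (-1:ℝ) 0))
      Set.Ioo_subset_Icc_self
  have hmemIco : Set.Ico (-1:ℝ) 0 ∈ 𝓝[<] (0:ℝ) :=
    Filter.mem_of_superset
      (Ioo_mem_nhdsLT_of_mem (⟨by norm_num, le_refl (0:ℝ)⟩ : (0:ℝ) ∈ Set.Ioc (-1:ℝ) 0))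
      Set.Ioo_subset_Ico_self
  have htend : Filter.Tendsto (fun x => ∫ z in (-1:ℝ)..x, (-z) ^ (2*ω - 1) * (f z)^2)
      (𝓝[<] (0:ℝ)) (𝓝 (∫ z in (-1:ℝ)..0, (-z) ^ (2*ω - 1) * (f z)^2)) := by
    have h0 := hprim 0 (by rw [huIcc]; exact Set.right_mem_Icc.mpr hle)
    exact h0.tendsto.mono_left (nhdsWithin_le_of_mem hmemIcc)
  exact le_of_tendsto htend (Filter.eventually_of_mem hmemIco hmain)
end

section
/- Let f ∈ C¹([-1,0]) with f(-1) = 0 and ω > 0. Then ∫_{-1}^{0} (-z)^{2ω-1} f(z)² dz ≤ (1/ω²) ∫_{-1}^{0} (-z)^{2ω+1} (f'(z))² dz. -/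
open Set MeasureTheory

private lemma wInt (r : ℝ) (hr : -1 < r) :
    IntervalIntegrable (fun z : ℝ => (-z) ^ r) volume (-1) 0 := by
  have h : IntervalIntegrable (fun x : ℝ => x ^ r) volume 1 0 :=
    intervalIntegral.intervalIntegrable_rpow' hr
  simpa using (IntervalIntegrable.iff_comp_neg (f := fun x : ℝ => x ^ r)).mp h

private lemma wgInt (r : ℝ) (hr : -1 < r) (g : ℝ → ℝ)
    (hg : ContinuousOn g (Set.Icc (-1:ℝ) 0)) :
    IntervalIntegrable (fun z : ℝ => (-z) ^ r * (g z)^2) volume (-1) 0 := by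
  obtain ⟨C, hC⟩ := (isCompact_Icc (a := (-1:ℝ)) (b := 0)).exists_bound_of_continuousOn hg
  rw [intervalIntegrable_iff_integrableOn_Ioo_of_le (by norm_num)]
  have hw : IntegrableOn (fun z : ℝ => C^2 * (-z) ^ r) (Set.Ioo (-1:ℝ) 0) volume :=
    (((wInt r hr).1).mono_set Set.Ioo_subset_Ioc_self).const_mul _
  refine hw.mono' ?_ ?_
  · have hwc : ContinuousOn (fun z : ℝ => (-z) ^ r) (Set.Ioo (-1:ℝ) 0) := by
      intro z hz
      exact ((Real.continuousAt_rpow_const (-z) r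
        (Or.inl (by simp only [Set.mem_Ioo] at hz; intro h; nlinarith [hz.1, hz.2]))).comp
        continuous_neg.continuousAt).continuousWithinAt
    exact (hwc.mul ((hg.mono Set.Ioo_subset_Icc_self).pow 2)).aestronglyMeasurable
      measurableSet_Ioo
  · rw [ae_restrict_iff' measurableSet_Ioo]
    filter_upwards with z hz
    have hz0 : (0:ℝ) ≤ -z := by linarith [hz.2]
    have hw0 : (0:ℝ) ≤ (-z) ^ r := Real.rpow_nonneg hz0 r
    have hgz : |g z| ≤ C := by
      have := hC z ⟨le_of_lt hz.1, le_of_lt hz.2⟩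
      simpa [Real.norm_eq_abs] using this
    have hg2 : (g z)^2 ≤ C^2 := by nlinarith [abs_nonneg (g z), sq_abs (g z)]
    calc ‖(-z) ^ r * (g z)^2‖ = (-z) ^ r * (g z)^2 := by
          rw [Real.norm_eq_abs, abs_of_nonneg (mul_nonneg hw0 (sq_nonneg _))]
      _ ≤ (-z) ^ r * C^2 := by nlinarith
      _ = C^2 * (-z) ^ r := by ring

/-- For `f ∈ C¹([-1,0])` with `f(-1) = 0` and `ω > 0`,
`∫_{-1}^{0} (-z)^{2ω-1} f(z)² dz ≤ (1/ω²) ∫_{-1}^{0} (-z)^{2ω+1} (f'(z))² dz`. -/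
theorem stmt_1 (f f' : ℝ → ℝ) (ω : ℝ) (hω : 0 < ω)
    (hderiv : ∀ z ∈ Set.Icc (-1:ℝ) 0, HasDerivWithinAt f (f' z) (Set.Icc (-1:ℝ) 0) z)
    (hcont : ContinuousOn f' (Set.Icc (-1:ℝ) 0))
    (hbc : f (-1) = 0) :
    ∫ z in (-1:ℝ)..0, (-z) ^ (2*ω - 1) * (f z)^2 ≤
      (1/ω^2) * ∫ z in (-1:ℝ)..0, (-z) ^ (2*ω + 1) * (f' z)^2 := by
  have hle : (-1:ℝ) ≤ 0 := by norm_num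
  have hfc : ContinuousOn f (Set.Icc (-1:ℝ) 0) := fun z hz =>
    (hderiv z hz).continuousWithinAt
  have h1 : (-1:ℝ) < 2*ω - 1 := by linarith
  have h2 : (-1:ℝ) < 2*ω + 1 := by linarith
  have hωne : (2*ω : ℝ) ≠ 0 := by positivity
  set I := ∫ z in (-1:ℝ)..0, (-z) ^ (2*ω - 1) * (f z)^2 with hIdef
  set J := ∫ z in (-1:ℝ)..0, (-z) ^ (2*ω + 1) * (f' z)^2 with hJdef
  have hI_int := wgInt _ h1 f hfc
  have hJ_int := wgInt _ h2 f' hcont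
  -- continuity of the weight (-z)^(2ω) on [-1,0]
  have hw0 : ContinuousOn (fun z : ℝ => (-z) ^ (2*ω)) (Set.Icc (-1:ℝ) 0) := by
    intro z hz
    exact ((Real.continuousAt_rpow_const (-z) (2*ω)
      (Or.inr (by positivity))).comp (continuous_neg.continuousAt)).continuousWithinAt
  have hK_cont : ContinuousOn (fun z : ℝ => (-z) ^ (2*ω) * (f z * f' z))
      (Set.Icc (-1:ℝ) 0) := hw0.mul (hfc.mul hcont)
  have hK_int : IntervalIntegrable (fun z : ℝ => (-z) ^ (2*ω) * (f z * f' z))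
      volume (-1) 0 := by
    apply hK_cont.intervalIntegrable_of_Icc hle
  set K := ∫ z in (-1:ℝ)..0, (-z) ^ (2*ω) * (f z * f' z) with hKdef
  -- FTC: integration by parts collapsed into one derivative
  have key : I - (1/ω) * K = 0 := by
    set F : ℝ → ℝ := fun z => -(1/(2*ω)) * ((-z) ^ (2*ω) * (f z)^2) with hF
    have hFcont : ContinuousOn F (Set.Icc (-1:ℝ) 0) :=
      continuousOn_const.mul (hw0.mul (hfc.pow 2))
    have hFderiv : ∀ x ∈ Set.Ioo (-1:ℝ) 0, HasDerivWithinAt F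
        ((-x) ^ (2*ω - 1) * (f x)^2 - (1/ω) * ((-x) ^ (2*ω) * (f x * f' x)))
        (Set.Ioi x) x := by
      intro x hx
      have hx0 : (0:ℝ) < -x := by linarith [hx.2]
      have hG : HasDerivAt (fun z : ℝ => (-z) ^ (2*ω))
          ((2*ω * (-x) ^ (2*ω - 1)) * (-1)) x := by
        have hbase : HasDerivAt (fun y : ℝ => y ^ (2*ω)) (2*ω * (-x) ^ (2*ω - 1)) (-x) :=
          Real.hasDerivAt_rpow_const (Or.inl (ne_of_gt hx0))
        have hneg : HasDerivAt (fun z : ℝ => -z) (-1) x := (hasDerivAt_id x).neg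
        exact hbase.comp x hneg
      have hf : HasDerivAt f (f' x) x := by
        have hmem : Set.Icc (-1:ℝ) 0 ∈ nhds x :=
          Icc_mem_nhds (by linarith [hx.1]) (by linarith [hx.2])
        exact (hderiv x (Set.Ioo_subset_Icc_self hx)).hasDerivAt hmem
      have hf2 : HasDerivAt (fun z => (f z)^2) (2 * f x ^ 1 * f' x) x := hf.pow 2
      have hprod := (hG.mul hf2).const_mul (-(1/(2*ω)))
      have heq : -(1/(2*ω)) * ((2*ω * (-x) ^ (2*ω - 1)) * (-1) * (f x)^2
          + (-x) ^ (2*ω) * (2 * f x ^ 1 * f' x))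
          = (-x) ^ (2*ω - 1) * (f x)^2 - (1/ω) * ((-x) ^ (2*ω) * (f x * f' x)) := by
        field_simp
        ring
      rw [heq] at hprod
      exact hprod.hasDerivWithinAt
    have hFint := hI_int.sub (hK_int.const_mul (1/ω))
    have hFTC := intervalIntegral.integral_eq_sub_of_hasDeriv_right_of_le hle hFcont
      hFderiv hFint
    have hF0 : F 0 = 0 := by
      simp only [hF, neg_zero, Real.zero_rpow hωne, zero_mul, mul_zero]
    have hFm1 : F (-1) = 0 := by
      simp only [hF, hbc]
      ring
    rw [hF0, hFm1, sub_zero,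
      intervalIntegral.integral_sub hI_int (hK_int.const_mul (1/ω)),
      intervalIntegral.integral_const_mul] at hFTC
    exact hFTC
  -- pointwise Young inequality
  have hpt : ∀ z ∈ Set.Icc (-1:ℝ) 0,
      (-z) ^ (2*ω) * (f z * f' z) ≤
        ω/2 * ((-z) ^ (2*ω - 1) * (f z)^2) + 1/(2*ω) * ((-z) ^ (2*ω + 1) * (f' z)^2) := by
    intro z hz
    rcases eq_or_lt_of_le hz.2 with h0 | h0
    · subst h0
      have hz1 : ((-(0:ℝ)) ^ (2*ω) : ℝ) = 0 := by rw [neg_zero, Real.zero_rpow hωne]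
      rw [hz1, zero_mul]
      have n1 : (0:ℝ) ≤ (-(0:ℝ)) ^ (2*ω - 1) := Real.rpow_nonneg (by norm_num) _
      have n2 : (0:ℝ) ≤ (-(0:ℝ)) ^ (2*ω + 1) := Real.rpow_nonneg (by norm_num) _
      have := sq_nonneg (f 0); have := sq_nonneg (f' 0)
      positivity
    · have hz0 : (0:ℝ) < -z := by linarith
      set u := (-z) ^ ((2*ω - 1)/2) * f z with hu
      set v := (-z) ^ ((2*ω + 1)/2) * f' z with hv
      have hu2 : u^2 = (-z) ^ (2*ω - 1) * (f z)^2 := by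
        rw [hu, mul_pow, ← Real.rpow_natCast ((-z) ^ ((2*ω - 1)/2)) 2,
          ← Real.rpow_mul hz0.le]
        norm_num
      have hv2 : v^2 = (-z) ^ (2*ω + 1) * (f' z)^2 := by
        rw [hv, mul_pow, ← Real.rpow_natCast ((-z) ^ ((2*ω + 1)/2)) 2,
          ← Real.rpow_mul hz0.le]
        norm_num
      have huv : u * v = (-z) ^ (2*ω) * (f z * f' z) := by
        have hadd : (-z) ^ ((2*ω - 1)/2) * (-z) ^ ((2*ω + 1)/2) = (-z) ^ (2*ω) := by
          rw [← Real.rpow_add hz0]; congr 1; ring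
        calc u * v = ((-z) ^ ((2*ω - 1)/2) * (-z) ^ ((2*ω + 1)/2)) * (f z * f' z) := by
              rw [hu, hv]; ring
          _ = (-z) ^ (2*ω) * (f z * f' z) := by rw [hadd]
      rw [← huv, ← hu2, ← hv2]
      rw [← sub_nonneg]
      have hform : ω/2 * u^2 + 1/(2*ω) * v^2 - u * v = (ω*u - v)^2 / (2*ω) := by
        field_simp
        ring
      rw [hform]
      positivity
  -- integrate the pointwise inequality
  have hmono : K ≤ ω/2 * I + 1/(2*ω) * J := by
    have := intervalIntegral.integral_mono_on hle hK_int
      ((hI_int.const_mul (ω/2)).add (hJ_int.const_mul (1/(2*ω)))) hpt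
    rwa [intervalIntegral.integral_add (hI_int.const_mul (ω/2)) (hJ_int.const_mul (1/(2*ω))),
      intervalIntegral.integral_const_mul, intervalIntegral.integral_const_mul] at this
  have hJ0 : 0 ≤ J := by
    apply intervalIntegral.integral_nonneg hle
    intro x hx
    exact mul_nonneg (Real.rpow_nonneg (by linarith [hx.2]) _) (sq_nonneg _)
  -- conclude
  have hωI : ω * I = K := by
    have : I = (1/ω) * K := by linarith
    rw [this]; field_simp
  have hmono2 : 2*ω*K ≤ ω*ω*I + J := by
    have h := mul_le_mul_of_nonneg_left hmono (by positivity : (0:ℝ) ≤ 2*ω)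
    have e : 2*ω*(ω/2*I + 1/(2*ω)*J) = ω*ω*I + J := by field_simp
    rw [e] at h
    exact h
  have hfin : ω^2 * I ≤ J := by nlinarith [hmono2, hωI]
  rw [← sub_nonneg]
  have : 1/ω^2 * J - I = (J - ω^2 * I) / ω^2 := by field_simp
  rw [this]
  exact div_nonneg (by linarith) (by positivity)
end

section
/- Let f ∈ C¹([-1,0]) with f(-1) = 0 and ω > 0. Then the weighted Hardy inequality ∫_{-1}^{0} (-z)^{2ω-1} f(z)²/(z+1)² dz ≤ C(ω) ∫_{-1}^{0} (-z)^{2ω+1} (f'(z))² dz holds with constant C(ω) = 4/ω² + 2^{2ω+4}. -/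
open Set MeasureTheory intervalIntegral Filter Topology

set_option maxHeartbeats 1000000

/-- Weighted Hardy inequality: for `f ∈ C¹([-1,0])` with `f(-1) = 0` and `ω > 0`,
`∫_{-1}^{0} (-z)^{2ω-1} f(z)²/(z+1)² dz ≤ C(ω) ∫_{-1}^{0} (-z)^{2ω+1} (f'(z))² dz`
with `C(ω) = 4/ω² + 2^{2ω+4}`. -/
theorem stmt_2 (f f' : ℝ → ℝ) (ω : ℝ) (hω : 0 < ω)
    (hderiv : ∀ z ∈ Set.Icc (-1:ℝ) 0, HasDerivWithinAt f (f' z) (Set.Icc (-1:ℝ) 0) z)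
    (hcont : ContinuousOn f' (Set.Icc (-1:ℝ) 0))
    (hbc : f (-1) = 0) :
    ∫ z in (-1:ℝ)..0, (-z) ^ (2*ω - 1) * (f z)^2 / (z + 1)^2 ≤
      (4/ω^2 + (2:ℝ) ^ (2*ω + 4)) * ∫ z in (-1:ℝ)..0, (-z) ^ (2*ω + 1) * (f' z)^2 := by
  set A : ℝ → ℝ := fun z => (-z) ^ (2*ω - 1) * (f z)^2 / (z + 1)^2 with hAdef
  set B : ℝ → ℝ := fun z => (-z) ^ (2*ω + 1) * (f' z)^2 with hBdef
  set C : ℝ → ℝ := fun z => (-z) ^ (2*ω) * (f z * f' z) / (z + 1) with hCdef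
  set φ : ℝ → ℝ := fun z => (-z) ^ (2*ω) * (f z)^2 / (z + 1) with hφdef
  set m : ℝ := min 1 (2*ω) with hmdef
  have hm : 0 < m := lt_min one_pos (by linarith)
  have hfc : ContinuousOn f (Set.Icc (-1:ℝ) 0) :=
    fun z hz => (hderiv z hz).continuousWithinAt
  -- bound on f'
  obtain ⟨K, hK⟩ := (isCompact_Icc (a := (-1:ℝ)) (b := 0)).exists_bound_of_continuousOn hcont
  have hflip : ∀ z ∈ Set.Icc (-1:ℝ) 0, |f z| ≤ K * (z + 1) := by
    intro z hz
    have := (convex_Icc (-1:ℝ) 0).norm_image_sub_le_of_norm_hasDerivWithin_le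
      hderiv (fun x hx => hK x hx) (by norm_num : (-1:ℝ) ∈ Set.Icc (-1:ℝ) 0) hz
    simpa [hbc, Real.norm_eq_abs, abs_of_nonneg (by linarith [hz.1] : (0:ℝ) ≤ z + 1)] using this
  -- nonnegativity
  have hA0 : ∀ z ∈ Set.Icc (-1:ℝ) 0, 0 ≤ A z := by
    intro z hz
    exact div_nonneg (mul_nonneg (Real.rpow_nonneg (by linarith [hz.2]) _) (sq_nonneg _))
      (sq_nonneg _)
  have hB0 : ∀ z ∈ Set.Icc (-1:ℝ) 0, 0 ≤ B z := by
    intro z hz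
    exact mul_nonneg (Real.rpow_nonneg (by linarith [hz.2]) _) (sq_nonneg _)
  -- continuity helpers
  have hrpowC : ∀ c : ℝ, 0 ≤ c → Continuous (fun z : ℝ => (-z) ^ c) := by
    intro c hc
    rw [continuous_iff_continuousAt]
    intro z
    exact (Real.continuousAt_rpow_const (-z) c (Or.inr hc)).comp continuous_neg.continuousAt
  have hrpowO : ∀ c : ℝ, ContinuousOn (fun z : ℝ => (-z) ^ c) (Set.Ioo (-1:ℝ) 0) := by
    intro c z hz
    exact ((Real.continuousAt_rpow_const (-z) c (Or.inl (by nlinarith [hz.2]))).comp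
      continuous_neg.continuousAt).continuousWithinAt
  have hAc : ContinuousOn A (Set.Ioo (-1:ℝ) 0) := by
    apply ContinuousOn.div
    · exact (hrpowO _).mul ((hfc.mono Set.Ioo_subset_Icc_self).pow 2)
    · exact ((continuousOn_id).add continuousOn_const).pow 2
    · intro z hz
      have : (0:ℝ) < z + 1 := by linarith [hz.1]
      positivity
  have hCcont : ContinuousOn C (Set.Ioo (-1:ℝ) 0) := by
    apply ContinuousOn.div
    · exact (hrpowO _).mul ((hfc.mono Set.Ioo_subset_Icc_self).mul
        (hcont.mono Set.Ioo_subset_Icc_self))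
    · exact (continuousOn_id).add continuousOn_const
    · intro z hz
      have : (0:ℝ) < z + 1 := by linarith [hz.1]
      positivity
  -- integrability
  have hIr : IntegrableOn (fun z : ℝ => (-z) ^ (2*ω-1)) (Set.Ioo (-1:ℝ) 0) := by
    have h1 : IntervalIntegrable (fun x : ℝ => x ^ (2*ω-1)) volume 0 1 :=
      intervalIntegrable_rpow' (by linarith)
    have h2 := (IntervalIntegrable.iff_comp_neg).mp h1
    rw [neg_zero] at h2
    have h3 := h2.symm
    rwa [intervalIntegrable_iff_integrableOn_Ioo_of_le (by norm_num)] at h3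
  have hA_int' : IntegrableOn A (Set.Ioo (-1:ℝ) 0) := by
    apply Integrable.mono' (hIr.const_mul (K^2)) (hAc.aestronglyMeasurable measurableSet_Ioo)
    filter_upwards [ae_restrict_mem measurableSet_Ioo] with z hz
    have h1 : (0:ℝ) < z + 1 := by linarith [hz.1]
    have h2 : 0 ≤ (-z) ^ (2*ω-1) := Real.rpow_nonneg (by linarith [hz.2]) _
    have h3 : |f z| ≤ K * (z+1) := hflip z (Set.Ioo_subset_Icc_self hz)
    have h4 : f z ^ 2 ≤ K^2 * (z+1)^2 := by nlinarith [abs_nonneg (f z), sq_abs (f z)]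
    rw [Real.norm_eq_abs, abs_of_nonneg (hA0 z (Set.Ioo_subset_Icc_self hz)), hAdef]
    rw [div_le_iff₀ (by positivity)]
    nlinarith [mul_le_mul_of_nonneg_left h4 h2]
  have hA_int : IntervalIntegrable A volume (-1) 0 :=
    (intervalIntegrable_iff_integrableOn_Ioo_of_le (by norm_num)).mpr hA_int'
  have hB_int : IntervalIntegrable B volume (-1) 0 := by
    apply ContinuousOn.intervalIntegrable
    rw [Set.uIcc_of_le (by norm_num : (-1:ℝ) ≤ 0)]
    exact ((hrpowC _ (by positivity)).continuousOn).mul (hcont.pow 2)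
  have hB_int' : IntegrableOn B (Set.Ioo (-1:ℝ) 0) :=
    (intervalIntegrable_iff_integrableOn_Ioo_of_le (by norm_num)).mp hB_int
  -- key identity C² = A·B on the open interval
  have hkey : ∀ z ∈ Set.Ioo (-1:ℝ) 0, C z ^ 2 = A z * B z := by
    intro z hz
    have hz0 : (0:ℝ) < -z := by linarith [hz.2]
    have hz1 : (0:ℝ) < z + 1 := by linarith [hz.1]
    have e1 : ((-z) ^ (2*ω)) ^ 2 = (-z) ^ (2*ω-1) * (-z) ^ (2*ω+1) := by
      rw [sq, ← Real.rpow_add hz0, ← Real.rpow_add hz0]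
      congr 1
      ring
    rw [hAdef, hBdef, hCdef]
    rw [div_pow, mul_pow, e1]
    ring
  have hC_int' : IntegrableOn C (Set.Ioo (-1:ℝ) 0) := by
    apply Integrable.mono' ((hA_int'.add hB_int').const_mul (1/2))
      (hCcont.aestronglyMeasurable measurableSet_Ioo)
    filter_upwards [ae_restrict_mem measurableSet_Ioo] with z hz
    have hk := hkey z hz
    have ha := hA0 z (Set.Ioo_subset_Icc_self hz)
    have hb := hB0 z (Set.Ioo_subset_Icc_self hz)
    simp only [Pi.add_apply]
    rw [Real.norm_eq_abs, abs_le]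
    constructor
    · nlinarith [hk, ha, hb, sq_nonneg (A z - B z)]
    · nlinarith [hk, ha, hb, sq_nonneg (A z - B z)]
  have hC_int : IntervalIntegrable C volume (-1) 0 :=
    (intervalIntegrable_iff_integrableOn_Ioo_of_le (by norm_num)).mpr hC_int'
  have hlA_int : IntervalIntegrable (fun z => (2*ω*(z+1) - z) * A z) volume (-1) 0 := by
    apply hA_int.continuousOn_mul
    exact (((continuous_const.mul (continuous_id.add continuous_const)).sub
      continuous_id).continuousOn)
  -- continuity of φ on the closed interval
  have hφm1 : φ (-1) = 0 := by rw [hφdef]; norm_num [hbc]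
  have hφ0 : φ 0 = 0 := by
    rw [hφdef]
    norm_num [Real.zero_rpow (show 2*ω ≠ 0 by positivity)]
  have hφcont : ContinuousOn φ (Set.Icc (-1:ℝ) 0) := by
    intro z hz
    rcases eq_or_lt_of_le hz.1 with h1 | h1
    · subst h1
      rw [← continuousWithinAt_diff_self]
      have hslope : Tendsto (slope f (-1)) (𝓝[Set.Icc (-1:ℝ) 0 \ {-1}] (-1)) (𝓝 (f' (-1))) :=
        hasDerivWithinAt_iff_tendsto_slope.mp (hderiv (-1) (by constructor <;> norm_num))
      have hgz : Tendsto (fun z : ℝ => (-z)^(2*ω) * (z+1))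
          (𝓝[Set.Icc (-1:ℝ) 0 \ {-1}] (-1)) (𝓝 0) := by
        have hcg : Continuous (fun z : ℝ => (-z)^(2*ω) * (z+1)) :=
          (hrpowC _ (by positivity)).mul (continuous_id.add continuous_const)
        have := hcg.continuousWithinAt (s := Set.Icc (-1:ℝ) 0 \ {-1}) (x := -1)
        simpa [ContinuousWithinAt, Real.one_rpow] using this
      have hlim := hgz.mul (hslope.mul hslope)
      rw [zero_mul] at hlim
      have heq : ∀ᶠ z in 𝓝[Set.Icc (-1:ℝ) 0 \ {-1}] (-1),
          (fun z : ℝ => (-z)^(2*ω) * (z+1)) z * (slope f (-1) z * slope f (-1) z) = φ z := by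
        filter_upwards [self_mem_nhdsWithin] with z hzm
        have hz1 : z + 1 ≠ 0 := by
          intro h
          exact hzm.2 (by simp only [Set.mem_singleton_iff]; linarith)
        rw [slope_def_field, hbc, hφdef, sub_neg_eq_add, sub_zero]
        field_simp
      show Tendsto φ _ (𝓝 (φ (-1)))
      rw [hφm1]
      exact Tendsto.congr' heq hlim
    · apply ContinuousWithinAt.div
      · exact ((hrpowC _ (by positivity)).continuousAt.continuousWithinAt).mul
          ((hfc z hz).pow 2)
      · exact continuousWithinAt_id.add continuousWithinAt_const
      · exact ne_of_gt (by linarith)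
  -- derivative of φ on the open interval
  have hφd : ∀ z ∈ Set.Ioo (-1:ℝ) 0,
      HasDerivAt φ (2 * C z - (2*ω*(z+1) - z) * A z) z := by
    intro z hz
    have hz0 : (0:ℝ) < -z := by linarith [hz.2]
    have hz1 : (0:ℝ) < z + 1 := by linarith [hz.1]
    have hfz : HasDerivAt f (f' z) z :=
      (hderiv z (Set.Ioo_subset_Icc_self hz)).hasDerivAt
        (Icc_mem_nhds (by linarith [hz.1]) (by linarith [hz.2]))
    have h1 : HasDerivAt (fun z : ℝ => (-z) ^ (2*ω)) (2*ω * (-z) ^ (2*ω-1) * (-1)) z := by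
      have hb := Real.hasDerivAt_rpow_const (x := -z) (p := 2*ω) (Or.inl (ne_of_gt hz0))
      exact hb.comp z (hasDerivAt_neg z)
    have h2 : HasDerivAt (fun z : ℝ => (f z)^2) (2 * f z * f' z) z := by
      have := hfz.pow 2
      have e : (fun z : ℝ => (f z)^2) = f ^ 2 := by ext; simp
      rw [e]
      simpa using this
    have h3 : HasDerivAt φ _ z := (h1.mul h2).div ((hasDerivAt_id z).add_const 1) (ne_of_gt hz1)
    convert h3 using 1
    have hrw : (-z) ^ (2*ω) = (-z) ^ (2*ω-1) * (-z) := by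
      rw [← Real.rpow_add_one (ne_of_gt hz0)]
      congr 1
      ring
    rw [hAdef, hCdef]
    simp only [hrw, Pi.mul_apply]
    field_simp
    ring
  -- FTC
  have hD_int : IntervalIntegrable (fun z => 2 * C z - (2*ω*(z+1) - z) * A z)
      volume (-1) 0 := (hC_int.const_mul 2).sub hlA_int
  have hFTC : (∫ z in (-1:ℝ)..0, (2 * C z - (2*ω*(z+1) - z) * A z)) = φ 0 - φ (-1) :=
    integral_eq_sub_of_hasDeriv_right_of_le (by norm_num) hφcont
      (fun z hz => (hφd z hz).hasDerivWithinAt) hD_int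
  rw [hφ0, hφm1, sub_zero] at hFTC
  have hsplit : (∫ z in (-1:ℝ)..0, (2 * C z - (2*ω*(z+1) - z) * A z)) =
      2 * (∫ z in (-1:ℝ)..0, C z) - (∫ z in (-1:ℝ)..0, (2*ω*(z+1) - z) * A z) := by
    rw [integral_sub (hC_int.const_mul 2) hlA_int, intervalIntegral.integral_const_mul]
  have hkeyint : (∫ z in (-1:ℝ)..0, (2*ω*(z+1) - z) * A z) = 2 * (∫ z in (-1:ℝ)..0, C z) := by
    rw [hsplit] at hFTC
    linarith
  -- lower bound
  have hmono1 : m * (∫ z in (-1:ℝ)..0, A z) ≤ (∫ z in (-1:ℝ)..0, (2*ω*(z+1) - z) * A z) := by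
    rw [← intervalIntegral.integral_const_mul]
    apply integral_mono_on (by norm_num) (hA_int.const_mul m) hlA_int
    intro z hz
    have ha := hA0 z hz
    have hlm : m ≤ 2*ω*(z+1) - z := by
      have h1 := min_le_left 1 (2*ω)
      have h2 := min_le_right 1 (2*ω)
      nlinarith [hz.1, hz.2]
    exact mul_le_mul_of_nonneg_right hlm ha
  -- upper bound via AM-GM
  have hmono2 : 2 * (∫ z in (-1:ℝ)..0, C z) ≤
      m/2 * (∫ z in (-1:ℝ)..0, A z) + 2/m * (∫ z in (-1:ℝ)..0, B z) := by
    have hpt : ∀ z ∈ Set.Icc (-1:ℝ) 0, 2 * C z ≤ m/2 * A z + 2/m * B z := by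
      intro z hz
      have ha := hA0 z hz
      have hb := hB0 z hz
      rcases eq_or_lt_of_le hz.1 with h1 | h1
      · have hc0 : C z = 0 := by rw [hCdef, ← h1]; norm_num [hbc]
        rw [hc0]
        have : 0 ≤ 2/m * B z := mul_nonneg (by positivity) hb
        nlinarith [mul_nonneg (le_of_lt hm) ha]
      rcases eq_or_lt_of_le hz.2 with h2 | h2
      · have hc0 : C z = 0 := by
          rw [hCdef, h2]
          norm_num [Real.zero_rpow (show 2*ω ≠ 0 by positivity)]
        rw [hc0]
        have : 0 ≤ 2/m * B z := mul_nonneg (by positivity) hb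
        nlinarith [mul_nonneg (le_of_lt hm) ha]
      · have hzo : z ∈ Set.Ioo (-1:ℝ) 0 := ⟨h1, h2⟩
        have hk := hkey z hzo
        rcases eq_or_lt_of_le ha with hA00 | hApos
        · have hc0 : C z = 0 := by
            have : C z ^ 2 = 0 := by rw [hk, ← hA00]; ring
            exact (pow_eq_zero_iff two_ne_zero).mp this
          rw [hc0, ← hA00]
          have : 0 ≤ 2/m * B z := mul_nonneg (by positivity) hb
          nlinarith
        · have h4 : 4*m*(C z) ≤ m^2 * A z + 4 * B z := by
            nlinarith [sq_nonneg (m * A z - 2 * C z), hApos, hm]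
          rw [← sub_nonneg]
          have expand : m/2 * A z + 2/m * B z - 2 * C z =
              (m^2 * A z + 4 * B z - 4*m*(C z)) / (2*m) := by
            field_simp
            ring
          rw [expand]
          exact div_nonneg (by linarith) (by positivity)
    have h2 : (∫ z in (-1:ℝ)..0, 2 * C z) ≤
        (∫ z in (-1:ℝ)..0, (m/2 * A z + 2/m * B z)) :=
      integral_mono_on (by norm_num) (hC_int.const_mul 2)
        ((hA_int.const_mul _).add (hB_int.const_mul _)) hpt
    rwa [intervalIntegral.integral_const_mul, integral_add (hA_int.const_mul _) (hB_int.const_mul _),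
      intervalIntegral.integral_const_mul, intervalIntegral.integral_const_mul] at h2
  have hIB0 : 0 ≤ (∫ z in (-1:ℝ)..0, B z) :=
    integral_nonneg (by norm_num) hB0
  -- combine
  have h5 : m/2 * (∫ z in (-1:ℝ)..0, A z) ≤ 2/m * (∫ z in (-1:ℝ)..0, B z) := by linarith
  have h6 := mul_le_mul_of_nonneg_left h5 (by positivity : (0:ℝ) ≤ 2/m)
  have e : 2/m * (m/2 * (∫ z in (-1:ℝ)..0, A z)) = (∫ z in (-1:ℝ)..0, A z) := by
    field_simp
  have e2 : 2/m * (2/m * (∫ z in (-1:ℝ)..0, B z)) = 4/m^2 * (∫ z in (-1:ℝ)..0, B z) := by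
    field_simp
    ring
  rw [e, e2] at h6
  have hconst : 4/m^2 ≤ 4/ω^2 + (2:ℝ) ^ (2*ω + 4) := by
    have hr16 : (16:ℝ) ≤ (2:ℝ) ^ (2*ω + 4) := by
      have h41 : ((2:ℝ) ^ ((4:ℕ):ℝ)) = 16 := by
        rw [Real.rpow_natCast]
        norm_num
      have := Real.rpow_le_rpow_of_exponent_le (by norm_num : (1:ℝ) ≤ 2)
        (by push_cast; linarith : ((4:ℕ):ℝ) ≤ 2*ω + 4)
      linarith [h41 ▸ this]
    rcases le_total 1 (2*ω) with h | h
    · rw [hmdef, min_eq_left h]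
      have : (0:ℝ) < 4/ω^2 := by positivity
      norm_num
      linarith
    · rw [hmdef, min_eq_right h]
      have h1 : 4/(2*ω)^2 = 1/ω^2 := by
        field_simp
        ring
      rw [h1]
      have h2 : 1/ω^2 ≤ 4/ω^2 := by gcongr <;> norm_num
      linarith
  calc (∫ z in (-1:ℝ)..0, A z) ≤ 4/m^2 * (∫ z in (-1:ℝ)..0, B z) := h6
    _ ≤ (4/ω^2 + (2:ℝ) ^ (2*ω + 4)) * (∫ z in (-1:ℝ)..0, B z) :=
      mul_le_mul_of_nonneg_right hconst hIB0
end

section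
/- Let f ∈ C²([-1,0]) with f(-1) = 0. Then for all z ∈ (-1,0], |d/dz ( f(z)/(z+1) )| ≤ (z+1)^{-1} ∫_{-1}^{z} |f''(z')| dz'. -/
/-- For `f ∈ C²([-1,0])` with `f(-1) = 0`, for all `z ∈ (-1,0]`,
`|d/dz ( f(z)/(z+1) )| ≤ (z+1)⁻¹ ∫_{-1}^{z} |f''(z')| dz'`.
(The derivative of `f(z)/(z+1)` is `f'(z)/(z+1) - f(z)/(z+1)²`.) -/
theorem stmt_4 (f f' f'' : ℝ → ℝ)
    (hd1 : ∀ z ∈ Set.Icc (-1:ℝ) 0, HasDerivWithinAt f (f' z) (Set.Icc (-1:ℝ) 0) z)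
    (hd2 : ∀ z ∈ Set.Icc (-1:ℝ) 0, HasDerivWithinAt f' (f'' z) (Set.Icc (-1:ℝ) 0) z)
    (hcont : ContinuousOn f'' (Set.Icc (-1:ℝ) 0))
    (hbc : f (-1) = 0) :
    ∀ z ∈ Set.Ioc (-1:ℝ) 0,
      |f' z / (z + 1) - f z / (z + 1)^2| ≤ (z + 1)⁻¹ * ∫ w in (-1:ℝ)..z, |f'' w| := by
  intro z hz
  obtain ⟨hz1, hz0⟩ := hz
  have hzpos : (0:ℝ) < z + 1 := by linarith
  have hzIcc : z ∈ Set.Icc (-1:ℝ) 0 := ⟨le_of_lt hz1, hz0⟩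
  -- continuity of f and f' on Icc
  have hcf : ContinuousOn f (Set.Icc (-1:ℝ) 0) := fun x hx =>
    (hd1 x hx).continuousWithinAt
  have hcf' : ContinuousOn f' (Set.Icc (-1:ℝ) 0) := fun x hx =>
    (hd2 x hx).continuousWithinAt
  -- interior derivative
  have hderivAt : ∀ x ∈ Set.Ioo (-1:ℝ) z, HasDerivAt f (f' x) x := by
    intro x hx
    have hxI : x ∈ Set.Icc (-1:ℝ) 0 := ⟨le_of_lt hx.1, le_trans (le_of_lt hx.2) hz0⟩
    exact (hd1 x hxI).hasDerivAt (Icc_mem_nhds hx.1 (lt_of_lt_of_le hx.2 hz0))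
  -- MVT
  obtain ⟨c, hc, hfc⟩ := exists_hasDerivAt_eq_slope f f' hz1
    (hcf.mono (Set.Icc_subset_Icc le_rfl hz0)) hderivAt
  have hcIcc : c ∈ Set.Icc (-1:ℝ) 0 :=
    ⟨le_of_lt hc.1, le_trans (le_of_lt hc.2) hz0⟩
  have hfz : f z = f' c * (z + 1) := by
    rw [hbc] at hfc
    field_simp at hfc
    linarith [hfc]
  have hcz : c ≤ z := le_of_lt hc.2
  -- FTC: f' z - f' c = ∫ f''
  have hsub : Set.Icc c z ⊆ Set.Icc (-1:ℝ) 0 :=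
    Set.Icc_subset_Icc (le_of_lt hc.1) hz0
  have hftc : ∫ w in c..z, f'' w = f' z - f' c := by
    apply intervalIntegral.integral_eq_sub_of_hasDeriv_right_of_le hcz
      (hcf'.mono hsub)
    · intro x hx
      have hxI : x ∈ Set.Icc (-1:ℝ) 0 :=
        ⟨le_trans hcIcc.1 (le_of_lt hx.1), le_trans (le_of_lt hx.2) hz0⟩
      have : HasDerivAt f' (f'' x) x :=
        (hd2 x hxI).hasDerivAt (Icc_mem_nhds (lt_of_le_of_lt hcIcc.1 hx.1)
          (lt_of_lt_of_le hx.2 hz0))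
      exact this.hasDerivWithinAt
    · exact (hcont.mono hsub).intervalIntegrable_of_Icc hcz
  -- integrability of |f''| on [-1, z]
  have hint : IntervalIntegrable (fun w => |f'' w|) MeasureTheory.volume (-1) z :=
    ((hcont.mono (Set.Icc_subset_Icc le_rfl hz0)).abs).intervalIntegrable_of_Icc
      (le_of_lt hz1)
  have h1 : |f' z - f' c| ≤ ∫ w in (-1:ℝ)..z, |f'' w| := by
    rw [← hftc]
    calc |∫ w in c..z, f'' w| ≤ ∫ w in c..z, |f'' w| := by
          rw [← Real.norm_eq_abs]
          refine (intervalIntegral.norm_integral_le_integral_norm hcz).trans_eq ?_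
          simp [Real.norm_eq_abs]
      _ ≤ ∫ w in (-1:ℝ)..z, |f'' w| := by
          apply intervalIntegral.integral_mono_interval (le_of_lt hc.1) hcz le_rfl
          · filter_upwards with x using abs_nonneg _
          · exact hint
  have hlhs : f' z / (z + 1) - f z / (z + 1)^2 = (f' z - f' c) / (z + 1) := by
    rw [hfz]; field_simp
  rw [hlhs, abs_div, abs_of_pos hzpos, div_le_iff₀ hzpos, inv_mul_eq_div, div_mul_eq_mul_div,
    mul_div_assoc, div_self (ne_of_gt hzpos), mul_one]
  exact h1
end

section
/- Let α ∈ (1,2), δ ∈ (0,1), and f : [-1,0] → ℝ with f ∈ C^N away from 0, f ∈ C¹ on [-1,0], and such that for 2 ≤ j ≤ N, the function z ↦ |z|^{j-α} f^{(j)}(z) extends to a δ-Hölder continuous function on [-1,0]. Then there exist a unique constant c₀ and, for each δ' ∈ (0,δ), a function f₁ with the analogous property for exponent α+δ' (and continuity in place of Hölder continuity), such that f(z) = c₀ |z|^α + f₁(z). -/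
open Set

/-- Membership in the localized space `C_N^{α}` on `[-1,0]` (continuity version, i.e. `δ = 0`):
`f ∈ C^N` away from `0`, `f ∈ C¹` on `[-1,0]`, and for `2 ≤ j ≤ N` the function
`z ↦ |z|^{j-α} f^{(j)}(z)` extends continuously to `[-1,0]`. -/
def MemLocC (N : ℕ) (α : ℝ) (f : ℝ → ℝ) : Prop :=
  ContDiffOn ℝ N f (Set.Icc (-1:ℝ) 0 \ {0}) ∧
  ContDiffOn ℝ 1 f (Set.Icc (-1:ℝ) 0) ∧
  ∀ j : ℕ, 2 ≤ j → j ≤ N →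
    ∃ g : ℝ → ℝ, ContinuousOn g (Set.Icc (-1:ℝ) 0) ∧
      ∀ z ∈ Set.Icc (-1:ℝ) 0 \ {0},
        g z = |z| ^ ((j : ℝ) - α) * iteratedDerivWithin j f (Set.Icc (-1:ℝ) 0 \ {0}) z

/-- Membership in the localized Hölder space `C_N^{α,δ}` on `[-1,0]`:
`f ∈ C^N` away from `0`, `f ∈ C¹` on `[-1,0]`, and for `2 ≤ j ≤ N` the function
`z ↦ |z|^{j-α} f^{(j)}(z)` extends to a `δ`-Hölder continuous function on `[-1,0]`. -/
def MemLocHolder (N : ℕ) (α : ℝ) (δ : NNReal) (f : ℝ → ℝ) : Prop :=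
  ContDiffOn ℝ N f (Set.Icc (-1:ℝ) 0 \ {0}) ∧
  ContDiffOn ℝ 1 f (Set.Icc (-1:ℝ) 0) ∧
  ∀ j : ℕ, 2 ≤ j → j ≤ N →
    ∃ C : NNReal, ∃ g : ℝ → ℝ, HolderOnWith C δ g (Set.Icc (-1:ℝ) 0) ∧
      ∀ z ∈ Set.Icc (-1:ℝ) 0 \ {0},
        g z = |z| ^ ((j : ℝ) - α) * iteratedDerivWithin j f (Set.Icc (-1:ℝ) 0 \ {0}) z


open Filter
open scoped ENNReal


noncomputable def Kc (α : ℝ) : ℕ → ℝ := fun j => (-1)^j * ∏ i ∈ Finset.range j, (α - i)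

lemma Kc_succ (α : ℝ) (j : ℕ) : Kc α (j+1) = ((j:ℝ) - α) * Kc α j := by
  simp only [Kc, Finset.prod_range_succ, pow_succ]; ring

lemma Kc_two (α : ℝ) : Kc α 2 = α * (α - 1) := by
  simp [Kc, Finset.prod_range_succ]

lemma hasDerivAt_negrpow (p : ℝ) {z : ℝ} (hz : z < 0) :
    HasDerivAt (fun z : ℝ => (-z) ^ p) (-(p * (-z) ^ (p-1))) z := by
  have h := Real.hasDerivAt_rpow_const (x := -z) (p := p) (Or.inl (ne_of_gt (neg_pos.2 hz)))
  have h2 := HasDerivAt.comp z h (hasDerivAt_neg z)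
  simpa [Function.comp_def, mul_comm] using h2

lemma iter_negrpow (α : ℝ) (j : ℕ) : ∀ z ∈ Ico (-1:ℝ) 0,
    iteratedDerivWithin j (fun z => (-z) ^ α) (Ico (-1:ℝ) 0) z = Kc α j * (-z) ^ (α - j) := by
  have udo : UniqueDiffOn ℝ (Ico (-1:ℝ) 0) := uniqueDiffOn_Ico (-1) 0
  induction j with
  | zero => intro z hz; simp [Kc]
  | succ j IH =>
    intro z hz
    rw [iteratedDerivWithin_succ,
      derivWithin_congr IH (IH z hz)]
    have h : HasDerivAt (fun z : ℝ => Kc α j * (-z) ^ (α - j))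
        (Kc α j * (-((α - j) * (-z) ^ (α - j - 1)))) z :=
      (hasDerivAt_negrpow (α - j) hz.2).const_mul (Kc α j)
    rw [h.hasDerivWithinAt.derivWithin (udo.uniqueDiffWithinAt hz), Kc_succ]
    have : α - (j+1:ℕ) = α - j - 1 := by push_cast; ring
    rw [this]; ring

lemma contDiffOn_negrpow (α : ℝ) (n : WithTop ℕ∞) :
    ContDiffOn ℝ n (fun z : ℝ => (-z) ^ α) (Iio (0:ℝ)) := fun z hz =>
  ((Real.contDiffAt_rpow_const_of_ne (ne_of_gt (neg_pos.2 hz))).comp z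
    contDiff_neg.contDiffAt).contDiffWithinAt

lemma contDiff_one_negrpow (α : ℝ) (hα : 1 ≤ α) : ContDiff ℝ 1 (fun z : ℝ => (-z)^α) := by
  have h := (Real.contDiff_rpow_const_of_le (n := 1) (by exact_mod_cast hα)).comp contDiff_neg
  exact_mod_cast h

lemma holder_dist_le {C δ : NNReal} {g : ℝ → ℝ} {s : Set ℝ} (h : HolderOnWith C δ g s)
    {x y : ℝ} (hx : x ∈ s) (hy : y ∈ s) :
    dist (g x) (g y) ≤ (C:ℝ) * dist x y ^ (δ:ℝ) := by
  have he := h.edist_le hx hy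
  rw [edist_dist, edist_dist] at he
  rw [ENNReal.ofReal_rpow_of_nonneg dist_nonneg NNReal.zero_le_coe] at he
  have : (C : ℝ≥0∞) * ENNReal.ofReal (dist x y ^ (δ:ℝ)) =
      ENNReal.ofReal ((C:ℝ) * dist x y ^ (δ:ℝ)) := by
    rw [ENNReal.ofReal_mul C.coe_nonneg, ENNReal.ofReal_coe_nnreal]
  rw [this, ENNReal.ofReal_le_ofReal_iff (by positivity)] at he
  exact he

-- value of a continuous extension at 0 is unique
lemma ext_val_unique {g g' : ℝ → ℝ} (hg : ContinuousOn g (Icc (-1) 0))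
    (hg' : ContinuousOn g' (Icc (-1) 0)) (heq : EqOn g g' (Ico (-1) 0)) : g 0 = g' 0 := by
  have h0 : (0:ℝ) ∈ Icc (-1:ℝ) 0 := by constructor <;> norm_num
  haveI hne : (nhdsWithin (0:ℝ) (Ico (-1:ℝ) 0)).NeBot := by
    rw [← mem_closure_iff_nhdsWithin_neBot, closure_Ico (by norm_num : (-1:ℝ) ≠ 0)]
    exact h0
  have t1 : Tendsto g (nhdsWithin 0 (Ico (-1:ℝ) 0)) (nhds (g 0)) :=
    (hg 0 h0).mono_left (nhdsWithin_mono 0 Ico_subset_Icc_self)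
  have t2 : Tendsto g' (nhdsWithin 0 (Ico (-1:ℝ) 0)) (nhds (g' 0)) :=
    (hg' 0 h0).mono_left (nhdsWithin_mono 0 Ico_subset_Icc_self)
  have t1' : Tendsto g (nhdsWithin 0 (Ico (-1:ℝ) 0)) (nhds (g' 0)) :=
    t2.congr' (eventually_mem_nhdsWithin.mono fun x hx => (heq hx).symm)
  exact tendsto_nhds_unique t1 t1'


lemma keyE {α : ℝ} (hα2 : α < 2) {j : ℕ} (hj : 2 ≤ j)
    {F G g h : ℝ → ℝ}
    (hg : ContinuousOn g (Icc (-1) 0)) (hh : ContinuousOn h (Icc (-1) 0))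
    (hgF : ∀ z ∈ Ico (-1:ℝ) 0, g z = (-z) ^ ((j:ℝ) - α) * F z)
    (hhG : ∀ z ∈ Ico (-1:ℝ) 0, h z = (-z) ^ ((j:ℝ) + 1 - α) * G z)
    (hFG : ∀ t ∈ Ioo (-1:ℝ) 0, HasDerivAt F (G t) t) :
    h 0 = ((j:ℝ) - α) * g 0 := by
  set p : ℝ := (j:ℝ) - α with hpdef
  have hp0 : 0 < p := by
    have : (2:ℝ) ≤ (j:ℝ) := by exact_mod_cast hj
    simp only [hpdef]; linarith
  set L : ℝ := h 0 / p with hLdef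
  have h0mem : (0:ℝ) ∈ Icc (-1:ℝ) 0 := by constructor <;> norm_num
  suffices hs : ∀ ε : ℝ, 0 < ε → |g 0 - L| ≤ ε by
    have habs : |g 0 - L| ≤ 0 := by
      by_contra hcon
      push_neg at hcon
      have := hs (|g 0 - L| / 2) (by linarith)
      linarith
    have : g 0 = L := by
      have := abs_nonneg (g 0 - L)
      have h1 : |g 0 - L| = 0 := le_antisymm habs this
      have := abs_eq_zero.mp h1
      linarith
    rw [this, hLdef]
    field_simp
  intro ε hε
  -- continuity of h at 0 within Icc
  have hc0 : ContinuousWithinAt h (Icc (-1) 0) 0 := hh 0 h0mem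
  rw [Metric.continuousWithinAt_iff] at hc0
  obtain ⟨η, hη, hcl⟩ := hc0 (ε * p) (by positivity)
  set y : ℝ := max (-η/2) (-1/2) with hydef
  have hy1 : (-1:ℝ) < y := lt_of_lt_of_le (by norm_num) (le_max_right _ _)
  have hy0 : y < 0 := max_lt (by linarith) (by norm_num)
  have hyIcc : y ∈ Icc (-1:ℝ) 0 := ⟨le_of_lt hy1, le_of_lt hy0⟩
  have hyIco : y ∈ Ico (-1:ℝ) 0 := ⟨le_of_lt hy1, hy0⟩
  have hyη : -y < η := by
    have : -η/2 ≤ y := le_max_left _ _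
    linarith
  -- the main estimate for x ∈ Ioo y 0
  set M : ℝ := |F y| + |h 0| * (-y) ^ (-p) / p with hMdef
  have key : ∀ x ∈ Ioo y 0, |g x - L| ≤ (-x) ^ p * M + ε := by
    intro x hx
    obtain ⟨hyx, hx0⟩ := hx
    have hx1 : (-1:ℝ) < x := lt_trans hy1 hyx
    have hxpos : (0:ℝ) < -x := by linarith
    have hypos : (0:ℝ) < -y := by linarith
    have hsub : Icc y x ⊆ Ioo (-1:ℝ) 0 := fun t ht => ⟨lt_of_lt_of_le hy1 ht.1, lt_of_le_of_lt ht.2 hx0⟩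
    have hsub' : Icc y x ⊆ Ico (-1:ℝ) 0 := fun t ht => ⟨le_of_lt (lt_of_lt_of_le hy1 ht.1), lt_of_le_of_lt ht.2 hx0⟩
    have huIcc : uIcc y x = Icc y x := uIcc_of_le (le_of_lt hyx)
    -- w is the weight
    set w : ℝ → ℝ := fun t => (-t) ^ (-(p+1)) with hwdef
    have hGw : ∀ t ∈ Ico (-1:ℝ) 0, G t = w t * h t := by
      intro t ht
      have htpos : (0:ℝ) < -t := by
        simp only [neg_pos]
        exact ht.2
      rw [hhG t ht, hwdef]
      simp only
      rw [← mul_assoc, ← Real.rpow_add htpos]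
      have : -(p+1) + ((j:ℝ) + 1 - α) = 0 := by simp [hpdef]; ring
      rw [this, Real.rpow_zero, one_mul]
    have hwcont : ContinuousOn w (Icc y x) := by
      intro t ht
      have htne : -t ≠ 0 := by
        have := (hsub ht).2; intro hc; apply absurd this; simp; linarith [neg_eq_zero.mp hc]
      exact (((Real.continuousAt_rpow_const (-t) (-(p+1)) (Or.inl htne))).comp
        (continuous_neg.continuousAt)).continuousWithinAt
    have hhcont : ContinuousOn h (Icc y x) := hh.mono (fun t ht => Ico_subset_Icc_self (hsub' ht))
    have hGcont : ContinuousOn G (Icc y x) := by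
      refine ContinuousOn.congr (hwcont.mul hhcont) ?_
      intro t ht; exact hGw t (hsub' ht)
    have hGint : IntervalIntegrable G MeasureTheory.volume y x := by
      rw [← huIcc] at hGcont
      exact hGcont.intervalIntegrable
    have e1 : ∫ t in y..x, G t = F x - F y := by
      apply intervalIntegral.integral_eq_sub_of_hasDerivAt
      · intro t ht
        rw [huIcc] at ht
        exact hFG t (hsub ht)
      · exact hGint
    -- integral of weight
    have hwint : IntervalIntegrable w MeasureTheory.volume y x := by
      have := hwcont
      rw [← huIcc] at this
      exact this.intervalIntegrable
    have e2 : ∫ t in y..x, w t = ((-x) ^ (-p) - (-y) ^ (-p)) / p := by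
      have : ∫ t in y..x, w t = (fun t => (-t) ^ (-p) / p) x - (fun t => (-t) ^ (-p) / p) y := by
        apply intervalIntegral.integral_eq_sub_of_hasDerivAt
        · intro t ht
          rw [huIcc] at ht
          have htneg : t < 0 := (hsub ht).2
          have hd := (hasDerivAt_negrpow (-p) htneg).div_const p
          have : -(-p * (-t) ^ (-p - 1)) / p = w t := by
            rw [hwdef]
            have : -p - 1 = -(p+1) := by ring
            rw [this]
            field_simp
          rwa [this] at hd
        · exact hwint
      rw [this]
      simp only
      ring
    -- error bound
    have e3 : |(∫ t in y..x, G t) - h 0 * (((-x) ^ (-p) - (-y) ^ (-p)) / p)| ≤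
        ε * p * ((-x) ^ (-p)) / p := by
      have hwint' : IntervalIntegrable (fun t => h 0 * w t) MeasureTheory.volume y x :=
        hwint.const_mul (h 0)
      have step_a : h 0 * (((-x) ^ (-p) - (-y) ^ (-p)) / p) = ∫ t in y..x, h 0 * w t := by
        rw [intervalIntegral.integral_const_mul, e2]
      rw [step_a, ← intervalIntegral.integral_sub hGint hwint']
      have bound : ∀ t ∈ Set.uIoc y x, ‖G t - h 0 * w t‖ ≤ ε * p * w t := by
        intro t ht
        rw [Set.uIoc_of_le (le_of_lt hyx)] at ht
        have htIco : t ∈ Ico (-1:ℝ) 0 :=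
          ⟨le_of_lt (lt_trans hy1 ht.1), lt_of_le_of_lt ht.2 hx0⟩
        have hwnn : 0 ≤ w t := Real.rpow_nonneg (by linarith [htIco.2]) _
        rw [hGw t htIco]
        have : w t * h t - h 0 * w t = w t * (h t - h 0) := by ring
        rw [this, Real.norm_eq_abs, abs_mul, abs_of_nonneg hwnn]
        have hdist : dist (h t) (h 0) < ε * p := by
          apply hcl (Ico_subset_Icc_self htIco)
          rw [Real.dist_eq, sub_zero, abs_of_neg htIco.2]
          linarith [ht.1]
        rw [Real.dist_eq] at hdist
        calc w t * |h t - h 0| ≤ w t * (ε * p) := by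
              apply mul_le_mul_of_nonneg_left (le_of_lt hdist) hwnn
          _ = ε * p * w t := by ring
      have hb := intervalIntegral.norm_integral_le_abs_of_norm_le
        (f := fun t => G t - h 0 * w t) (g := fun t => ε * p * w t)
        (MeasureTheory.ae_restrict_of_forall_mem measurableSet_uIoc bound)
        (hwint.const_mul (ε * p))
      rw [Real.norm_eq_abs] at hb
      refine le_trans hb ?_
      rw [intervalIntegral.integral_const_mul, e2]
      have hAy : 0 ≤ (-y) ^ (-p) := Real.rpow_nonneg (le_of_lt hypos) _
      have hAx : 0 ≤ (-x) ^ (-p) := Real.rpow_nonneg (le_of_lt hxpos) _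
      rw [abs_mul, abs_of_nonneg (by positivity : (0:ℝ) ≤ ε * p)]
      rw [abs_div, abs_of_pos hp0]
      have h2 : (-y) ^ (-p) ≤ (-x) ^ (-p) :=
        Real.rpow_le_rpow_of_nonpos hxpos (by linarith) (by linarith)
      have h1 : |(-x) ^ (-p) - (-y) ^ (-p)| ≤ (-x) ^ (-p) := by
        rw [abs_of_nonneg (by linarith)]; linarith
      calc ε * p * (|(-x) ^ (-p) - (-y) ^ (-p)| / p) ≤ ε * p * ((-x) ^ (-p) / p) := by
            gcongr
        _ = ε * p * ((-x) ^ (-p)) / p := by ring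
    -- final estimate
    have hxIco : x ∈ Ico (-1:ℝ) 0 := ⟨le_of_lt hx1, hx0⟩
    have hAy : (0:ℝ) ≤ (-y) ^ (-p) := Real.rpow_nonneg (le_of_lt hypos) _
    have hAx : (0:ℝ) ≤ (-x) ^ (-p) := Real.rpow_nonneg (le_of_lt hxpos) _
    have hQpos : (0:ℝ) < (-x) ^ p := Real.rpow_pos_of_pos hxpos p
    set I : ℝ := ∫ t in y..x, G t with hIdef
    set E : ℝ := I - h 0 * (((-x) ^ (-p) - (-y) ^ (-p)) / p) with hEdef
    have hEbd : |E| ≤ ε * p * ((-x) ^ (-p)) / p := e3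
    have hxinv : (-x) ^ p * (-x) ^ (-p) = 1 := by
      rw [← Real.rpow_add hxpos]; simp
    have hFx : F x = F y + I := by rw [e1]; ring
    have hgx : g x - L =
        (-x) ^ p * F y + (-x) ^ p * (-(h 0 * (-y) ^ (-p) / p)) + (-x) ^ p * E := by
      have h1 : g x = (-x) ^ p * F x := hgF x hxIco
      have hI : I = h 0 * (((-x) ^ (-p) - (-y) ^ (-p)) / p) + E := by rw [hEdef]; ring
      rw [hLdef]
      linear_combination h1 + (-x) ^ p * hFx + (-x) ^ p * hI + (h 0 / p) * hxinv
    have habs : |g x - L| ≤ (-x) ^ p * |F y| + (-x) ^ p * (|h 0| * (-y) ^ (-p) / p)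
        + (-x) ^ p * |E| := by
      rw [hgx]
      refine (abs_add_three _ _ _).trans ?_
      rw [abs_mul, abs_mul, abs_mul, abs_of_pos hQpos]
      have : |(-(h 0 * (-y) ^ (-p) / p))| = |h 0| * (-y) ^ (-p) / p := by
        rw [abs_neg, abs_div, abs_mul, abs_of_pos hp0, abs_of_nonneg hAy]
      rw [this]
    have hEsimp : ε * p * ((-x) ^ (-p)) / p = ε * ((-x) ^ (-p)) := by
      field_simp
    calc |g x - L| ≤ (-x) ^ p * |F y| + (-x) ^ p * (|h 0| * (-y) ^ (-p) / p)
        + (-x) ^ p * |E| := habs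
      _ ≤ (-x) ^ p * |F y| + (-x) ^ p * (|h 0| * (-y) ^ (-p) / p)
        + (-x) ^ p * (ε * ((-x) ^ (-p))) := by
          rw [← hEsimp]; gcongr
      _ = (-x) ^ p * M + ε * ((-x) ^ p * (-x) ^ (-p)) := by rw [hMdef]; ring
      _ = (-x) ^ p * M + ε := by rw [hxinv, mul_one]
  -- take the limit x → 0⁻ along Ioo y 0
  haveI hne : (nhdsWithin (0:ℝ) (Ioo y 0)).NeBot := by
    rw [← mem_closure_iff_nhdsWithin_neBot, closure_Ioo (ne_of_lt hy0)]
    exact ⟨le_of_lt hy0, le_refl 0⟩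
  have hIooSub : Ioo y 0 ⊆ Icc (-1:ℝ) 0 := fun t ht =>
    ⟨le_of_lt (lt_trans hy1 ht.1), le_of_lt ht.2⟩
  have t1 : Tendsto (fun x => |g x - L|) (nhdsWithin 0 (Ioo y 0)) (nhds (|g 0 - L|)) := by
    have hg0 : ContinuousWithinAt g (Ioo y 0) 0 := (hg 0 h0mem).mono hIooSub
    exact (hg0.sub tendsto_const_nhds).abs
  have t2 : Tendsto (fun x : ℝ => (-x) ^ p * M + ε) (nhdsWithin 0 (Ioo y 0))
      (nhds (0 * M + ε)) := by
    have hc : ContinuousAt (fun x : ℝ => (-x) ^ p) 0 := by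
      have hr := Real.continuousAt_rpow_const (-(0:ℝ)) p (Or.inr (le_of_lt hp0))
      exact ContinuousAt.comp (by simpa using hr) (continuous_neg.continuousAt (x := (0:ℝ)))
    have hc0' : Tendsto (fun x : ℝ => (-x) ^ p) (nhds 0) (nhds 0) := by
      have h2 := hc.tendsto
      simpa [Real.zero_rpow (ne_of_gt hp0)] using h2
    exact ((hc0'.mono_left nhdsWithin_le_nhds).mul_const M).add tendsto_const_nhds
  have hev : ∀ᶠ x in nhdsWithin (0:ℝ) (Ioo y 0),
      |g x - L| ≤ (-x) ^ p * M + ε :=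
    eventually_mem_nhdsWithin.mono fun x hx => key x hx
  have hle := le_of_tendsto_of_tendsto t1 t2 hev
  linarith [hle]
-- derivative link: the (j+1)-st iterated derivative is the derivative of the j-th
lemma deriv_link {N : ℕ} {f : ℝ → ℝ} (hfN : ContDiffOn ℝ N f (Ico (-1:ℝ) 0))
    {j : ℕ} (hjN : j + 1 ≤ N) :
    ∀ t ∈ Ioo (-1:ℝ) 0, HasDerivAt (iteratedDerivWithin j f (Ico (-1:ℝ) 0))
      (iteratedDerivWithin (j+1) f (Ico (-1:ℝ) 0) t) t := by
  intro t ht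
  have udo : UniqueDiffOn ℝ (Ico (-1:ℝ) 0) := uniqueDiffOn_Ico (-1) 0
  have htS : t ∈ Ico (-1:ℝ) 0 := Ioo_subset_Ico_self ht
  have hmem : Ico (-1:ℝ) 0 ∈ nhds t :=
    mem_nhds_iff.2 ⟨Ioo (-1) 0, Ioo_subset_Ico_self, isOpen_Ioo, ht⟩
  have hdiff : DifferentiableWithinAt ℝ (iteratedDerivWithin j f (Ico (-1:ℝ) 0))
      (Ico (-1:ℝ) 0) t := by
    refine (hfN.differentiableOn_iteratedDerivWithin ?_ udo) t htS
    exact_mod_cast Nat.lt_of_succ_le hjN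
  have hdAt : DifferentiableAt ℝ (iteratedDerivWithin j f (Ico (-1:ℝ) 0)) t :=
    hdiff.differentiableAt hmem
  have heq : iteratedDerivWithin (j+1) f (Ico (-1:ℝ) 0) t =
      deriv (iteratedDerivWithin j f (Ico (-1:ℝ) 0)) t := by
    rw [iteratedDerivWithin_succ, derivWithin_of_mem_nhds hmem]
  rw [heq]
  exact hdAt.hasDerivAt

-- matching limits at 0 within the interval
lemma lim_match {g g' : ℝ → ℝ} {a q : ℝ} (hq : 0 < q)
    (hgc : ContinuousOn g (Icc (-1) 0)) (hg'c : ContinuousOn g' (Icc (-1) 0))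
    (heq : ∀ z ∈ Ico (-1:ℝ) 0, g z = a + (-z) ^ q * g' z) : g 0 = a := by
  have h0 : (0:ℝ) ∈ Icc (-1:ℝ) 0 := by constructor <;> norm_num
  haveI hne : (nhdsWithin (0:ℝ) (Ico (-1:ℝ) 0)).NeBot := by
    rw [← mem_closure_iff_nhdsWithin_neBot, closure_Ico (by norm_num : (-1:ℝ) ≠ 0)]
    exact h0
  have t1 : Tendsto g (nhdsWithin 0 (Ico (-1:ℝ) 0)) (nhds (g 0)) :=
    (hgc 0 h0).mono_left (nhdsWithin_mono 0 Ico_subset_Icc_self)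
  have hc : ContinuousAt (fun x : ℝ => (-x) ^ q) 0 := by
    have hr := Real.continuousAt_rpow_const (-(0:ℝ)) q (Or.inr (le_of_lt hq))
    exact ContinuousAt.comp (by simpa using hr) (continuous_neg.continuousAt (x := (0:ℝ)))
  have hc0 : Tendsto (fun x : ℝ => (-x) ^ q) (nhds 0) (nhds 0) := by
    have h2 := hc.tendsto
    simpa [Real.zero_rpow (ne_of_gt hq)] using h2
  have t2 : Tendsto (fun z => a + (-z) ^ q * g' z) (nhdsWithin 0 (Ico (-1:ℝ) 0))
      (nhds (a + 0 * g' 0)) := by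
    refine Tendsto.add tendsto_const_nhds (Tendsto.mul ?_ ?_)
    · exact hc0.mono_left nhdsWithin_le_nhds
    · exact (hg'c 0 h0).mono_left (nhdsWithin_mono 0 Ico_subset_Icc_self)
  have t1' : Tendsto g (nhdsWithin 0 (Ico (-1:ℝ) 0)) (nhds (a + 0 * g' 0)) :=
    t2.congr' (eventually_mem_nhdsWithin.mono fun z hz => (heq z hz).symm)
  have := tendsto_nhds_unique t1 t1'
  simpa using this

/-- decomposition lemma: for `α ∈ (1,2)`, `δ ∈ (0,1)` and
`f ∈ C_N^{α,δ}([-1,0])`, there exists a unique constant `c₀` such that for every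
`δ' ∈ (0,δ)` there is `f₁ ∈ C_N^{α+δ'}` with `f = c₀ |z|^α + f₁` on `[-1,0]`. -/
theorem stmt_6 (N : ℕ) (hN : 2 ≤ N) (α : ℝ) (hα : α ∈ Set.Ioo (1:ℝ) 2)
    (δ : NNReal) (hδ0 : 0 < δ) (hδ1 : (δ : ℝ) < 1)
    (f : ℝ → ℝ) (hf : MemLocHolder N α δ f) :
    ∃! c₀ : ℝ, ∀ δ' : ℝ, 0 < δ' → δ' < (δ : ℝ) →
      ∃ f₁ : ℝ → ℝ, MemLocC N (α + δ') f₁ ∧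
        ∀ z ∈ Set.Icc (-1:ℝ) 0, f z = c₀ * |z| ^ α + f₁ z := by
  obtain ⟨hα1, hα2⟩ := hα
  have hδ0' : (0:ℝ) < (δ:ℝ) := hδ0
  have hSeq : Set.Icc (-1:ℝ) 0 \ {0} = Set.Ico (-1:ℝ) 0 := Icc_sdiff_right
  obtain ⟨hfN, hf1, hfj⟩ := hf
  rw [hSeq] at hfN hfj
  have udo : UniqueDiffOn ℝ (Ico (-1:ℝ) 0) := uniqueDiffOn_Ico (-1) 0
  have habs : ∀ z ∈ Ico (-1:ℝ) 0, |z| = -z := fun z hz => abs_of_neg hz.2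
  have hIcoIio : Ico (-1:ℝ) 0 ⊆ Iio 0 := fun z hz => hz.2
  have hfj' : ∀ j : ℕ, 2 ≤ j → j ≤ N → ∃ C : NNReal, ∃ g : ℝ → ℝ,
      HolderOnWith C δ g (Icc (-1:ℝ) 0) ∧ ∀ z ∈ Ico (-1:ℝ) 0,
        g z = (-z) ^ ((j:ℝ) - α) * iteratedDerivWithin j f (Ico (-1:ℝ) 0) z := by
    intro j h2 hN'
    obtain ⟨C, g, hH, heq⟩ := hfj j h2 hN'
    exact ⟨C, g, hH, fun z hz => by rw [heq z hz, habs z hz]⟩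
  obtain ⟨C₂, g₂, hg₂H, hg₂eq⟩ := hfj' 2 le_rfl hN
  have hg₂c : ContinuousOn g₂ (Icc (-1:ℝ) 0) := hg₂H.continuousOn hδ0
  set c₀ : ℝ := g₂ 0 / (α * (α - 1)) with hc₀def
  have hKne : α * (α - 1) ≠ 0 := by
    have h1 : (0:ℝ) < α := by linarith
    have h2 : (0:ℝ) < α - 1 := by linarith
    positivity
  have hg₂0 : g₂ 0 = c₀ * Kc α 2 := by
    rw [Kc_two, hc₀def]; field_simp
  -- forced value of any continuous extension at 0
  have val : ∀ j : ℕ, 2 ≤ j → j ≤ N → ∀ g : ℝ → ℝ, ContinuousOn g (Icc (-1:ℝ) 0) →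
      (∀ z ∈ Ico (-1:ℝ) 0,
        g z = (-z) ^ ((j:ℝ) - α) * iteratedDerivWithin j f (Ico (-1:ℝ) 0) z) →
      g 0 = c₀ * Kc α j := by
    intro j hj2
    induction j, hj2 using Nat.le_induction with
    | base =>
      intro _ g hgc hgeq
      have hu := ext_val_unique hgc hg₂c (fun z hz => by rw [hgeq z hz, hg₂eq z hz])
      rw [hu, hg₂0]
    | succ j hj2 IH =>
      intro hj1N g hgc hgeq
      have hjN : j ≤ N := le_trans (Nat.le_succ j) hj1N
      obtain ⟨C', g', hg'H, hg'eq⟩ := hfj' j hj2 hjN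
      have hg'c : ContinuousOn g' (Icc (-1:ℝ) 0) := hg'H.continuousOn hδ0
      have hgeq' : ∀ z ∈ Ico (-1:ℝ) 0,
          g z = (-z) ^ ((j:ℝ) + 1 - α) * iteratedDerivWithin (j+1) f (Ico (-1:ℝ) 0) z := by
        intro z hz
        rw [hgeq z hz]
        norm_num
      have hstep := keyE hα2 hj2 hg'c hgc hg'eq hgeq' (deriv_link hfN hj1N)
      rw [hstep, IH hjN g' hg'c hg'eq, Kc_succ]
      ring
  -- smoothness of the model function
  have hcsm : ∀ (n : WithTop ℕ∞), ContDiffOn ℝ n (fun z : ℝ => (-z) ^ α) (Ico (-1:ℝ) 0) :=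
    fun n => (contDiffOn_negrpow α n).mono hIcoIio
  -- iterated derivatives of the difference
  have hDsub : ∀ c : ℝ, ∀ j : ℕ, j ≤ N → ∀ z ∈ Ico (-1:ℝ) 0,
      iteratedDerivWithin j (fun z => f z - c * (-z) ^ α) (Ico (-1:ℝ) 0) z
      = iteratedDerivWithin j f (Ico (-1:ℝ) 0) z - c * (Kc α j * (-z) ^ (α - j)) := by
    intro c j hjN z hz
    have hfun : (fun z => f z - c * (-z) ^ α) = f - (fun z : ℝ => c * (-z) ^ α) := rfl
    rw [hfun, iteratedDerivWithin_sub hz udo ((hfN.of_le (by exact_mod_cast hjN)) z hz)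
      ((contDiffOn_const.mul (hcsm j)) z hz),
      iteratedDerivWithin_const_mul hz udo c (hcsm j z hz), iter_negrpow α j z hz]
  refine ⟨c₀, ?_, ?_⟩
  · -- existence
    intro δ' hδ'0 hδ'δ
    refine ⟨fun z => f z - c₀ * (-z) ^ α, ⟨?_, ?_, ?_⟩, ?_⟩
    · rw [hSeq]
      exact hfN.sub (contDiffOn_const.mul (hcsm N))
    · have h1 : ContDiff ℝ 1 (fun z : ℝ => c₀ * (-z) ^ α) :=
        contDiff_const.mul (contDiff_one_negrpow α (le_of_lt hα1))
      exact hf1.sub h1.contDiffOn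
    · intro j hj2 hjN
      obtain ⟨C, gj, hgH, hgeq⟩ := hfj' j hj2 hjN
      have hgc : ContinuousOn gj (Icc (-1:ℝ) 0) := hgH.continuousOn hδ0
      have hg0 : gj 0 = c₀ * Kc α j := val j hj2 hjN gj hgc hgeq
      refine ⟨fun z => (-z) ^ (-δ') * (gj z - c₀ * Kc α j), ?_, ?_⟩
      · -- continuity of the new extension
        intro z hz
        by_cases hz0 : z = 0
        · subst hz0
          unfold ContinuousWithinAt
          simp only [hg0, sub_self, mul_zero]
          have hq : (0:ℝ) < (δ:ℝ) - δ' := by linarith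
          apply squeeze_zero_norm'
            (a := fun w => (C:ℝ) * (-w) ^ ((δ:ℝ) - δ'))
          · refine eventually_mem_nhdsWithin.mono fun w hw => ?_
            rcases eq_or_lt_of_le hw.2 with hw0 | hw0
            · rw [hw0]
              norm_num [Real.zero_rpow (show -δ' ≠ 0 by linarith), Real.zero_rpow (ne_of_gt hq)]
            · have hwpos : (0:ℝ) < -w := by linarith
              have hd : dist (gj w) (gj 0) ≤ (C:ℝ) * dist w 0 ^ (δ:ℝ) :=
                holder_dist_le hgH hw (by constructor <;> norm_num)
              rw [Real.dist_eq, Real.dist_eq, sub_zero, abs_of_neg hw0] at hd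
              have hnn : (0:ℝ) ≤ (-w) ^ (-δ') := Real.rpow_nonneg (le_of_lt hwpos) _
              rw [Real.norm_eq_abs, abs_mul, abs_of_nonneg hnn, ← hg0]
              calc (-w) ^ (-δ') * |gj w - gj 0| ≤ (-w) ^ (-δ') * ((C:ℝ) * (-w) ^ (δ:ℝ)) := by
                    apply mul_le_mul_of_nonneg_left _ hnn
                    rw [← Real.dist_eq]; exact hd
                _ = (C:ℝ) * (-w) ^ ((δ:ℝ) - δ') := by
                    rw [show (δ:ℝ) - δ' = (-δ') + (δ:ℝ) by ring, Real.rpow_add hwpos]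
                    ring
          · have hc : ContinuousAt (fun w : ℝ => (-w) ^ ((δ:ℝ) - δ')) 0 := by
              have hr := Real.continuousAt_rpow_const (-(0:ℝ)) ((δ:ℝ) - δ') (Or.inr (le_of_lt hq))
              exact ContinuousAt.comp (by simpa using hr) (continuous_neg.continuousAt (x := (0:ℝ)))
            have hc0 : Tendsto (fun w : ℝ => (-w) ^ ((δ:ℝ) - δ')) (nhds 0) (nhds 0) := by
              have h2 := hc.tendsto
              simpa [Real.zero_rpow (ne_of_gt hq)] using h2
            have := (hc0.mono_left (nhdsWithin_le_nhds
              (s := Icc (-1:ℝ) 0))).const_mul (C:ℝ)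
            simpa using this
        · -- z ≠ 0
          have hzneg : z < 0 := lt_of_le_of_ne hz.2 hz0
          have hzne : -z ≠ 0 := by intro hcon; apply hz0; linarith [neg_eq_zero.mp hcon]
          refine ContinuousWithinAt.mul ?_ ((hgc z hz).sub continuousWithinAt_const)
          exact (ContinuousAt.comp (Real.continuousAt_rpow_const (-z) (-δ') (Or.inl hzne))
            (continuous_neg.continuousAt)).continuousWithinAt
      · -- the defining formula
        rw [hSeq]
        intro z hz
        have hzneg : z < 0 := hz.2
        have hpos : (0:ℝ) < -z := by linarith
        beta_reduce
        rw [hDsub c₀ j hjN z hz, habs z hz, hgeq z hz]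
        have hprod : (-z) ^ ((j:ℝ) - α) * (-z) ^ (α - (j:ℝ)) = 1 := by
          rw [← Real.rpow_add hpos]; norm_num
        have e1 : ((j:ℝ) - (α + δ')) = (-δ') + ((j:ℝ) - α) := by ring
        rw [e1, Real.rpow_add hpos]
        linear_combination c₀ * Kc α j * (-z) ^ (-δ') * hprod
    · -- decomposition identity
      intro z hz
      rw [abs_of_nonpos hz.2]
      ring
  · -- uniqueness
    intro c hc
    obtain ⟨f₁, ⟨hm1, hm2, hm3⟩, hdec⟩ := hc ((δ:ℝ)/2) (by linarith) (by linarith)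
    rw [hSeq] at hm1 hm3
    obtain ⟨g', hg'c, hg'eq⟩ := hm3 2 le_rfl hN
    have hfeq : Set.EqOn f (fun z => c * (-z) ^ α + f₁ z) (Ico (-1:ℝ) 0) := by
      intro z hz
      have h1 := hdec z (Ico_subset_Icc_self hz)
      rw [habs z hz] at h1
      exact h1
    have key2 : ∀ z ∈ Ico (-1:ℝ) 0, g₂ z = c * Kc α 2 + (-z) ^ ((δ:ℝ)/2) * g' z := by
      intro z hz
      have hpos : (0:ℝ) < -z := by have := hz.2; linarith
      have hcongr := (iteratedDerivWithin_congr (n := 2) hfeq) hz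
      have hadd : iteratedDerivWithin 2 (fun z => c * (-z) ^ α + f₁ z) (Ico (-1:ℝ) 0) z
          = c * (Kc α 2 * (-z) ^ (α - 2)) + iteratedDerivWithin 2 f₁ (Ico (-1:ℝ) 0) z := by
        have hfun : (fun z => c * (-z) ^ α + f₁ z) = (fun z : ℝ => c * (-z) ^ α) + f₁ := rfl
        rw [hfun, iteratedDerivWithin_add hz udo ((contDiffOn_const.mul (hcsm 2)) z hz)
          ((hm1.of_le (by exact_mod_cast hN)) z hz), iteratedDerivWithin_const_mul hz udo c (hcsm 2 z hz),
          iter_negrpow α 2 z hz]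
        norm_num
      have hg' := hg'eq z hz
      rw [habs z hz] at hg'
      have hD2 : iteratedDerivWithin 2 f₁ (Ico (-1:ℝ) 0) z
          = (-z) ^ (α + (δ:ℝ)/2 - 2) * g' z := by
        rw [hg', ← mul_assoc, ← Real.rpow_add hpos]
        norm_num
      rw [hg₂eq z hz, hcongr, hadd, hD2]
      have e1 : (-z) ^ (((2:ℕ):ℝ) - α) * (-z) ^ (α - 2) = 1 := by
        rw [← Real.rpow_add hpos]; norm_num
      have e2 : (-z) ^ (((2:ℕ):ℝ) - α) * (-z) ^ (α + (δ:ℝ)/2 - 2) = (-z) ^ ((δ:ℝ)/2) := by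
        rw [← Real.rpow_add hpos]; norm_num
      linear_combination c * Kc α 2 * e1 + g' z * e2
    have hδq : (0:ℝ) < (δ:ℝ)/2 := by linarith
    have hg₂0' : g₂ 0 = c * Kc α 2 := lim_match hδq hg₂c hg'c key2
    rw [hg₂0] at hg₂0'
    have hK2 : Kc α 2 ≠ 0 := by rw [Kc_two]; exact hKne
    exact (mul_right_cancel₀ hK2 hg₂0'.symm)
end

section
/- Consider the recurrence, for n ≥ 0: (q n + 1 + σ)(n+1) a_{n+1} = α₁ a_n + α₂ A_n and (q(n+1) + σ)(n+1) A_{n+1} + k (n+1) a_{n+1} = α₃ A_n, where q = 1 - k², σ is a complex parameter with Re σ ∈ [-1-β, -β] for some β ∈ (0, 1/2), and |α₁|, |α₂|, |α₃| ≤ d. Suppose the initial data (a₀, A₀) is chosen so that a₁ and A₁ (and hence all a_n, A_n) are well-defined (i.e. the coefficients (qn+1+σ)(n+1) and (q(n+1)+σ)(n+1) are nonzero for all n in the iteration). Then there is a constant C (depending on β, k, a₀, A₀) such that |a_n| ≤ C d^n / n! and |A_n| ≤ C d^n / n! for all n ≥ 1; consequently the power series Σ a_n (-z)^n and Σ A_n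 (-z)^n converge absolutely for z ∈ [-1,0]. -/
set_option maxHeartbeats 1600000


/-- coefficient bounds `|a_n|, |A_n| ≤ C dⁿ/n!` for the Frobenius recurrence
`(qn+1+σ)(n+1) a_{n+1} = α₁ a_n + α₂ A_n`,
`(q(n+1)+σ)(n+1) A_{n+1} + k(n+1) a_{n+1} = α₃ A_n`,
with `q = 1-k²`, `Re σ ∈ [-1-β,-β]`, `β ∈ (0,1/2)`, `|αᵢ| ≤ d`, assuming the coefficients
of the recurrence never vanish; consequently the power series `Σ a_n (-z)^n`, `Σ A_n (-z)^n`
converge absolutely for `z ∈ [-1,0]`. -/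
theorem stmt_7 (k β d q : ℝ) (σ α₁ α₂ α₃ : ℂ) (a A : ℕ → ℂ)
    (hk : k ≠ 0) (hksmall : k^2 < 1/2) (hq : q = 1 - k^2)
    (hβ : β ∈ Set.Ioo (0:ℝ) (1/2))
    (hσ : σ.re ∈ Set.Icc (-1-β) (-β))
    (hd : 0 ≤ d) (hα₁ : ‖α₁‖ ≤ d) (hα₂ : ‖α₂‖ ≤ d) (hα₃ : ‖α₃‖ ≤ d)
    (hcoef : ∀ n : ℕ, ((q : ℂ) * n + 1 + σ ≠ 0) ∧ ((q : ℂ) * ((n : ℂ) + 1) + σ ≠ 0))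
    (hrec1 : ∀ n : ℕ,
      ((q : ℂ) * n + 1 + σ) * ((n : ℂ) + 1) * a (n+1) = α₁ * a n + α₂ * A n)
    (hrec2 : ∀ n : ℕ,
      ((q : ℂ) * ((n : ℂ) + 1) + σ) * ((n : ℂ) + 1) * A (n+1)
        + (k : ℂ) * ((n : ℂ) + 1) * a (n+1) = α₃ * A n) :
    ∃ C : ℝ,
      (∀ n : ℕ, 1 ≤ n →
        ‖a n‖ ≤ C * d ^ n / (n.factorial : ℝ) ∧ ‖A n‖ ≤ C * d ^ n / (n.factorial : ℝ)) ∧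
      ∀ z ∈ Set.Icc (-1:ℝ) 0,
        Summable (fun n : ℕ => ‖a n * ((-z : ℝ) : ℂ) ^ n‖) ∧
        Summable (fun n : ℕ => ‖A n * ((-z : ℝ) : ℂ) ^ n‖) := by
  have hq2 : (1:ℝ)/2 < q := by rw [hq]; linarith
  have hqlt : q < 1 := by rw [hq]; nlinarith [sq_nonneg k, hk, sq_abs k, abs_pos.mpr hk]
  have hk1 : |k| ≤ 1 := by nlinarith [abs_nonneg k, sq_abs k]
  have hσlo : -(3/2 : ℝ) ≤ σ.re := by have := hσ.1; have := hβ.2; linarith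
  have hnorm_np : ∀ n : ℕ, ‖((n:ℂ)+1)‖ = (n:ℝ)+1 := by
    intro n
    rw [show ((n:ℂ)+1) = (((n+1:ℕ)):ℂ) by push_cast; ring, Complex.norm_natCast]
    push_cast; ring
  have hb1 : ∀ n : ℕ, 24 ≤ n → (10:ℝ) ≤ ‖(q:ℂ)*n + 1 + σ‖ := by
    intro n hn
    have hre : ((q:ℂ)*n + 1 + σ).re = q*n + 1 + σ.re := by
      simp [Complex.add_re, Complex.mul_re]
    have hn' : (24:ℝ) ≤ n := by exact_mod_cast hn
    have h1 : (10:ℝ) ≤ ((q:ℂ)*n+1+σ).re := by rw [hre]; nlinarith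
    have h2 := Complex.re_le_norm ((q:ℂ)*n+1+σ)
    linarith
  have hb2 : ∀ n : ℕ, 24 ≤ n → (10:ℝ) ≤ ‖(q:ℂ)*((n:ℂ)+1) + σ‖ := by
    intro n hn
    have hre : ((q:ℂ)*((n:ℂ)+1) + σ).re = q*((n:ℝ)+1) + σ.re := by
      simp [Complex.add_re, Complex.mul_re]
    have hn' : (24:ℝ) ≤ n := by exact_mod_cast hn
    have h1 : (10:ℝ) ≤ ((q:ℂ)*((n:ℂ)+1)+σ).re := by rw [hre]; nlinarith
    have h2 := Complex.re_le_norm ((q:ℂ)*((n:ℂ)+1)+σ)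
    linarith
  -- the key one-step bound
  have key : ∀ n : ℕ, 24 ≤ n →
      (‖a (n+1)‖ + ‖A (n+1)‖) * ((n:ℝ)+1) ≤ d * (‖a n‖ + ‖A n‖) := by
    intro n hn
    have hm : (0:ℝ) < (n:ℝ)+1 := by positivity
    have e1 : ‖((q:ℂ)*n + 1 + σ)‖ * (((n:ℝ)+1) * ‖a (n+1)‖)
        ≤ d * ‖a n‖ + d * ‖A n‖ := by
      have h := congrArg norm (hrec1 n)
      rw [norm_mul, norm_mul, hnorm_np] at h
      rw [mul_assoc] at h
      calc ‖((q:ℂ)*n + 1 + σ)‖ * (((n:ℝ)+1) * ‖a (n+1)‖)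
          = ‖α₁ * a n + α₂ * A n‖ := h
        _ ≤ ‖α₁ * a n‖ + ‖α₂ * A n‖ := norm_add_le _ _
        _ ≤ d * ‖a n‖ + d * ‖A n‖ := by
            rw [norm_mul, norm_mul]
            gcongr
    have eq2 : ((q:ℂ)*((n:ℂ)+1) + σ) * ((n:ℂ)+1) * A (n+1)
        = α₃ * A n - (k:ℂ) * ((n:ℂ)+1) * a (n+1) := by
      linear_combination hrec2 n
    have e2 : ‖((q:ℂ)*((n:ℂ)+1) + σ)‖ * (((n:ℝ)+1) * ‖A (n+1)‖)
        ≤ d * ‖A n‖ + ((n:ℝ)+1) * ‖a (n+1)‖ := by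
      have h := congrArg norm eq2
      rw [norm_mul, norm_mul, hnorm_np, mul_assoc] at h
      calc ‖((q:ℂ)*((n:ℂ)+1) + σ)‖ * (((n:ℝ)+1) * ‖A (n+1)‖)
          = ‖α₃ * A n - (k:ℂ) * ((n:ℂ)+1) * a (n+1)‖ := h
        _ ≤ ‖α₃ * A n‖ + ‖(k:ℂ) * ((n:ℂ)+1) * a (n+1)‖ := norm_sub_le _ _
        _ ≤ d * ‖A n‖ + ((n:ℝ)+1) * ‖a (n+1)‖ := by
            rw [norm_mul, norm_mul, norm_mul, hnorm_np]
            have hknorm : ‖((k:ℝ):ℂ)‖ ≤ 1 := by rw [Complex.norm_real]; exact hk1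
            nlinarith [mul_le_mul_of_nonneg_right hα₃ (norm_nonneg (A n)),
              mul_le_mul_of_nonneg_right hknorm
                (mul_nonneg (le_of_lt hm) (norm_nonneg (a (n+1))))]
    have F1 : 10 * (((n:ℝ)+1) * ‖a (n+1)‖) ≤ d * ‖a n‖ + d * ‖A n‖ := by
      have := mul_le_mul_of_nonneg_right (hb1 n hn)
        (by positivity : (0:ℝ) ≤ ((n:ℝ)+1) * ‖a (n+1)‖)
      linarith
    have F2 : 10 * (((n:ℝ)+1) * ‖A (n+1)‖) ≤ d * ‖A n‖ + ((n:ℝ)+1) * ‖a (n+1)‖ := by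
      have := mul_le_mul_of_nonneg_right (hb2 n hn)
        (by positivity : (0:ℝ) ≤ ((n:ℝ)+1) * ‖A (n+1)‖)
      linarith
    have hdx : 0 ≤ d * ‖a n‖ := by positivity
    have hdy : 0 ≤ d * ‖A n‖ := by positivity
    nlinarith [F1, F2, hdx, hdy]
  rcases eq_or_lt_of_le hd with hd0 | hd0
  · -- d = 0 : all coefficients vanish for n ≥ 1
    have hα₁0 : α₁ = 0 := norm_le_zero_iff.mp (by linarith)
    have hα₂0 : α₂ = 0 := norm_le_zero_iff.mp (by linarith)
    have hα₃0 : α₃ = 0 := norm_le_zero_iff.mp (by linarith)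
    have ha0 : ∀ n : ℕ, a (n+1) = 0 := by
      intro n
      have h := hrec1 n
      rw [hα₁0, hα₂0] at h
      simp only [zero_mul, add_zero] at h
      rcases mul_eq_zero.mp h with h' | h'
      · rcases mul_eq_zero.mp h' with h'' | h''
        · exact absurd h'' (hcoef n).1
        · exact absurd h'' (Nat.cast_add_one_ne_zero n)
      · exact h'
    have hA0 : ∀ n : ℕ, A (n+1) = 0 := by
      intro n
      have h := hrec2 n
      rw [hα₃0, ha0 n] at h
      simp only [zero_mul, mul_zero, add_zero] at h
      rcases mul_eq_zero.mp h with h' | h'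
      · rcases mul_eq_zero.mp h' with h'' | h''
        · exact absurd h'' (hcoef n).2
        · exact absurd h'' (Nat.cast_add_one_ne_zero n)
      · exact h'
    refine ⟨‖a 0‖ + ‖A 0‖, ?_, ?_⟩
    · intro n hn
      obtain ⟨m, rfl⟩ := Nat.exists_eq_add_of_le hn
      rw [← hd0, zero_pow (by omega : 1 + m ≠ 0)]
      constructor
      · rw [show 1 + m = m + 1 by omega, ha0 m]; simp
      · rw [show 1 + m = m + 1 by omega, hA0 m]; simp
    · intro z hz
      constructor
      · apply summable_of_ne_finset_zero (s := {0})
        intro n hn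
        simp only [Finset.mem_singleton] at hn
        obtain ⟨m, rfl⟩ := Nat.exists_eq_add_of_le (Nat.one_le_iff_ne_zero.mpr hn)
        rw [show 1 + m = m + 1 by omega, ha0 m]
        simp
      · apply summable_of_ne_finset_zero (s := {0})
        intro n hn
        simp only [Finset.mem_singleton] at hn
        obtain ⟨m, rfl⟩ := Nat.exists_eq_add_of_le (Nat.one_le_iff_ne_zero.mpr hn)
        rw [show 1 + m = m + 1 by omega, hA0 m]
        simp
  · -- d > 0
    obtain ⟨C₀, hC₀def⟩ : ∃ c : ℝ,
        c = ∑ j ∈ Finset.range 25, (‖a j‖ + ‖A j‖) * (j.factorial : ℝ) / d ^ j := ⟨_, rfl⟩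
    have hC₀term : ∀ j : ℕ, j ≤ 24 →
        (‖a j‖ + ‖A j‖) * (j.factorial : ℝ) / d ^ j ≤ C₀ := by
      intro j hj
      rw [hC₀def]
      apply Finset.single_le_sum (f := fun j => (‖a j‖ + ‖A j‖) * (j.factorial : ℝ) / d ^ j)
      · intro i _; positivity
      · exact Finset.mem_range.mpr (by omega)
    have hC₀nn : 0 ≤ C₀ := hC₀def ▸ Finset.sum_nonneg (fun i _ => by positivity)
    have hCb : ∀ j : ℕ, j ≤ 24 → ‖a j‖ + ‖A j‖ ≤ C₀ * d ^ j / (j.factorial : ℝ) := by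
      intro j hj
      have hf : (0:ℝ) < (j.factorial : ℝ) := by exact_mod_cast j.factorial_pos
      have hdp : (0:ℝ) < d ^ j := by positivity
      have := hC₀term j hj
      rw [div_le_iff₀ hdp] at this
      rw [le_div_iff₀ hf]
      nlinarith
    have main : ∀ n : ℕ, ‖a n‖ + ‖A n‖ ≤ C₀ * d ^ n / (n.factorial : ℝ) := by
      intro n
      rcases le_or_gt n 24 with hn | hn
      · exact hCb n hn
      · -- induction from 24
        have H : ∀ m : ℕ, 24 ≤ m → ‖a m‖ + ‖A m‖ ≤ C₀ * d ^ m / (m.factorial : ℝ) := by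
          intro m hm
          induction m, hm using Nat.le_induction with
          | base => exact hCb 24 le_rfl
          | succ m hm IH =>
            have hkey := key m hm
            have hmp : (0:ℝ) < (m:ℝ)+1 := by positivity
            have hf : (0:ℝ) < (m.factorial : ℝ) := by exact_mod_cast m.factorial_pos
            have h2 : d * (‖a m‖ + ‖A m‖) ≤ d * (C₀ * d ^ m / (m.factorial : ℝ)) :=
              mul_le_mul_of_nonneg_left IH hd
            have h3 : ‖a (m+1)‖ + ‖A (m+1)‖
                ≤ d * (C₀ * d ^ m / (m.factorial : ℝ)) / ((m:ℝ)+1) := by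
              rw [le_div_iff₀ hmp]; linarith
            calc ‖a (m+1)‖ + ‖A (m+1)‖
                ≤ d * (C₀ * d ^ m / (m.factorial : ℝ)) / ((m:ℝ)+1) := h3
              _ = C₀ * d ^ (m+1) / ((m+1).factorial : ℝ) := by
                  rw [Nat.factorial_succ]
                  push_cast
                  field_simp
                  ring
        exact H n (le_of_lt hn)
    refine ⟨C₀ + ‖a 0‖ + ‖A 0‖, ?_, ?_⟩
    · intro n hn
      have h := main n
      have hextra : (0:ℝ) ≤ (‖a 0‖ + ‖A 0‖) * d ^ n / (n.factorial : ℝ) := by positivity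
      constructor
      · have : ‖a n‖ ≤ C₀ * d ^ n / (n.factorial : ℝ) := by
          have := norm_nonneg (A n); linarith
        calc ‖a n‖ ≤ C₀ * d ^ n / (n.factorial : ℝ) := this
          _ ≤ (C₀ + ‖a 0‖ + ‖A 0‖) * d ^ n / (n.factorial : ℝ) := by
              gcongr
              linarith [norm_nonneg (a 0), norm_nonneg (A 0)]
      · have : ‖A n‖ ≤ C₀ * d ^ n / (n.factorial : ℝ) := by
          have := norm_nonneg (a n); linarith
        calc ‖A n‖ ≤ C₀ * d ^ n / (n.factorial : ℝ) := this
          _ ≤ (C₀ + ‖a 0‖ + ‖A 0‖) * d ^ n / (n.factorial : ℝ) := by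
              gcongr
              linarith [norm_nonneg (a 0), norm_nonneg (A 0)]
    · intro z hz
      have hw : ‖((-z:ℝ):ℂ)‖ ≤ 1 := by
        rw [Complex.norm_real, norm_neg, Real.norm_eq_abs, abs_le]
        exact ⟨hz.1, by linarith [hz.2]⟩
      set C := C₀ + ‖a 0‖ + ‖A 0‖ with hC
      have hCnn : 0 ≤ C := by
        have := norm_nonneg (a 0); have := norm_nonneg (A 0); positivity
      have hsum : Summable (fun n : ℕ => C * (d ^ n / (n.factorial : ℝ))) :=
        (Real.summable_pow_div_factorial d).mul_left C
      have hbd : ∀ n : ℕ, ∀ f : ℕ → ℂ,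
          (‖f n‖ ≤ C * d ^ n / (n.factorial : ℝ)) →
          ‖f n * ((-z:ℝ):ℂ) ^ n‖ ≤ C * (d ^ n / (n.factorial : ℝ)) := by
        intro n f hf
        rw [norm_mul, norm_pow, ← mul_div_assoc]
        calc ‖f n‖ * ‖((-z:ℝ):ℂ)‖ ^ n ≤ (C * d ^ n / (n.factorial : ℝ)) * 1 := by
              apply mul_le_mul hf _ (by positivity) (by positivity)
              exact pow_le_one₀ (norm_nonneg _) hw
          _ = C * d ^ n / (n.factorial : ℝ) := mul_one _
      have hna : ∀ n : ℕ, ‖a n‖ ≤ C * d ^ n / (n.factorial : ℝ) := by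
        intro n
        rcases Nat.eq_zero_or_pos n with rfl | hn
        · simp only [pow_zero, Nat.factorial_zero, Nat.cast_one, mul_one, div_one]
          rw [hC]
          have := norm_nonneg (A 0); linarith
        · have h := main n
          have := norm_nonneg (A n)
          have hextra : (0:ℝ) ≤ (‖a 0‖ + ‖A 0‖) * d ^ n / (n.factorial : ℝ) := by positivity
          have hC₀le : C₀ * d ^ n / (n.factorial : ℝ) ≤ C * d ^ n / (n.factorial : ℝ) := by
            rw [hC]; gcongr
            linarith [norm_nonneg (a 0), norm_nonneg (A 0)]
          linarith
      have hnA : ∀ n : ℕ, ‖A n‖ ≤ C * d ^ n / (n.factorial : ℝ) := by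
        intro n
        rcases Nat.eq_zero_or_pos n with rfl | hn
        · simp only [pow_zero, Nat.factorial_zero, Nat.cast_one, mul_one, div_one]
          rw [hC]
          have := norm_nonneg (a 0); linarith
        · have h := main n
          have := norm_nonneg (a n)
          have hC₀le : C₀ * d ^ n / (n.factorial : ℝ) ≤ C * d ^ n / (n.factorial : ℝ) := by
            rw [hC]; gcongr
            linarith [norm_nonneg (a 0), norm_nonneg (A 0)]
          linarith
      constructor
      · exact Summable.of_nonneg_of_le (fun n => norm_nonneg _)
          (fun n => hbd n a (hna n)) hsum
      · exact Summable.of_nonneg_of_le (fun n => norm_nonneg _)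
          (fun n => hbd n A (hnA n)) hsum
end

section
/- Let k ≠ 0, q = 1-k², and let Y_σ(z) be the 4×4 fundamental matrix of the first-order system associated to q z f'' + (1+σ) f' + d₁ f + d₂ g = 0, q z g'' + k f' + (q+σ) g' + d₃ g = 0, formed from a solution basis whose leading-order behaviors at z = 0 are (1, kq/σ), (0, 1+σ/q), (-z)^{-(k²+σ)/q}(1, 1/k), and (-z)^{-σ/q}(0,1). Then det Y_σ(z) = (1 + σ/q) · ((k²+σ)/q) · (σ/q) · (-z)^{-(k²+2σ)/q - 2} for all z ∈ (-1,0). In particular, Y_σ is invertible for z ∈ (-1,0) if and only if σ ∉ {-q, -k², 0}. -/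
open Filter

set_option maxHeartbeats 2000000 in
def Dt (a b c d : Fin 4 → ℂ) : ℂ := Matrix.det (Matrix.of ![a, b, c, d])

lemma Dt_eq (a b c d : Fin 4 → ℂ) : Dt a b c d = a 0*b 1*c 2*d 3 - a 0*b 1*c 3*d 2 - a 0*b 2*c 1*d 3 + a 0*b 2*c 3*d 1 + a 0*b 3*c 1*d 2 - a 0*b 3*c 2*d 1 - a 1*b 0*c 2*d 3 + a 1*b 0*c 3*d 2 + a 1*b 2*c 0*d 3 - a 1*b 2*c 3*d 0 - a 1*b 3*c 0*d 2 + a 1*b 3*c 2*d 0 + a 2*b 0*c 1*d 3 - a 2*b 0*c 3*d 1 - a 2*b 1*c 0*d 3 + a 2*b 1*c 3*d 0 + a 2*b 3*c 0*d 1 - a 2*b 3*c 1*d 0 - a 3*b 0*c 1*d 2 + a 3*b 0*c 2*d 1 + a 3*b 1*c 0*d 2 - a 3*b 1*c 2*d 0 - a 3*b 2*c 0*d 1 + a 3*b 2*c 1*d 0 := by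
  simp [Dt, Matrix.det_succ_row_zero, Fin.sum_univ_succ,
    show (2:Fin 3).succ = (3:Fin 4) from rfl, show Fin.castSucc (2:Fin 3) = (2:Fin 4) from rfl,
    show Fin.succAbove (2:Fin 4) 2 = 3 from rfl, show Fin.succAbove (1:Fin 4) 2 = 3 from rfl,
    show Fin.succAbove (3:Fin 4) 2 = 2 from rfl]
  ring


set_option maxHeartbeats 2000000 in
lemma Dt_hasDerivAt (a b c d : Fin 4 → ℝ → ℂ) (a' b' c' d' : Fin 4 → ℂ) (z : ℝ)
    (ha : ∀ j, HasDerivAt (a j) (a' j) z) (hb : ∀ j, HasDerivAt (b j) (b' j) z)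
    (hc : ∀ j, HasDerivAt (c j) (c' j) z) (hd : ∀ j, HasDerivAt (d j) (d' j) z) :
    HasDerivAt (fun t => Dt (fun j => a j t) (fun j => b j t) (fun j => c j t) (fun j => d j t))
      (Dt a' (fun j => b j z) (fun j => c j z) (fun j => d j z)
        + Dt (fun j => a j z) b' (fun j => c j z) (fun j => d j z)
        + Dt (fun j => a j z) (fun j => b j z) c' (fun j => d j z)
        + Dt (fun j => a j z) (fun j => b j z) (fun j => c j z) d') z := by
  simp only [Dt_eq]
  refine HasDerivAt.congr_deriv (((((((((((((((((((((((((((ha 0).mul (hb 1)).mul (hc 2)).mul (hd 3)).sub ((((ha 0).mul (hb 1)).mul (hc 3)).mul (hd 2))).sub ((((ha 0).mul (hb 2)).mul (hc 1)).mul (hd 3))).add ((((ha 0).mul (hb 2)).mul (hc 3)).mul (hd 1))).add ((((ha 0).mul (hb 3)).mul (hc 1)).mul (hd 2))).sub ((((ha 0).mul (hb 3)).mul (hc 2)).mul (hd 1))).sub ((((ha 1).mul (hb 0)).mul (hc 2)).mul (hd 3))).add ((((ha 1).mul (hb 0)).mul (hc 3)).mul (hd 2))).add ((((ha 1).mul (hb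 2)).mul (hc 0)).mul (hd 3))).sub ((((ha 1).mul (hb 2)).mul (hc 3)).mul (hd 0))).sub ((((ha 1).mul (hb 3)).mul (hc 0)).mul (hd 2))).add ((((ha 1).mul (hb 3)).mul (hc 2)).mul (hd 0))).add ((((ha 2).mul (hb 0)).mul (hc 1)).mul (hd 3))).sub ((((ha 2).mul (hb 0)).mul (hc 3)).mul (hd 1))).sub ((((ha 2).mul (hb 1)).mul (hc 0)).mul (hd 3))).add ((((ha 2).mul (hb 1)).mul (hc 3)).mul (hd 0))).add ((((ha 2).mul (hb 3)).mul (hc 0)).mul (hd 1))).sub ((((ha 2).mul (hb 3)).mul (hc 1)).mul (hd 0))).sub ((((ha 3).mul (hb 0)).mul (hc 1)).mul (hd 2))).add ((((ha 3).mul (hb 0)).mul (hc 2)).mul (hd 1))).add ((((ha 3).mul (hb 1)).mul (hc 0)).mul (hd 2))).sub ((((ha 3).mul (hb 1)).mul (hc 2)).mul (hd 0))).sub ((((ha 3).mul (hb 2)).mul (hc 0)).mul (hd 1))).add ((((ha 3).mul (hb 2)).mul (hc 1)).mul (hd 0))) ?_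
  simp only [Pi.mul_apply]
  ring

set_option maxHeartbeats 2000000 in
lemma Dt_tendsto {α : Type} {l : Filter α} (a b c d : α → Fin 4 → ℂ) (A B C D : Fin 4 → ℂ)
    (ha : ∀ j, Filter.Tendsto (fun t => a t j) l (nhds (A j)))
    (hb : ∀ j, Filter.Tendsto (fun t => b t j) l (nhds (B j)))
    (hc : ∀ j, Filter.Tendsto (fun t => c t j) l (nhds (C j)))
    (hd : ∀ j, Filter.Tendsto (fun t => d t j) l (nhds (D j))) :
    Filter.Tendsto (fun t => Dt (a t) (b t) (c t) (d t)) l (nhds (Dt A B C D)) := by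
  simp only [Dt_eq]
  exact (((((((((((((((((((((((((((ha 0).mul (hb 1)).mul (hc 2)).mul (hd 3)).sub ((((ha 0).mul (hb 1)).mul (hc 3)).mul (hd 2))).sub ((((ha 0).mul (hb 2)).mul (hc 1)).mul (hd 3))).add ((((ha 0).mul (hb 2)).mul (hc 3)).mul (hd 1))).add ((((ha 0).mul (hb 3)).mul (hc 1)).mul (hd 2))).sub ((((ha 0).mul (hb 3)).mul (hc 2)).mul (hd 1))).sub ((((ha 1).mul (hb 0)).mul (hc 2)).mul (hd 3))).add ((((ha 1).mul (hb 0)).mul (hc 3)).mul (hd 2))).add ((((ha 1).mul (hb 2)).mul (hc 0)).mul (hd 3))).sub ((((ha 1).mul (hb 2)).mul (hc 3)).mul (hd 0))).sub ((((ha 1).mul (hb 3)).mul (hc 0)).mul (hd 2))).add ((((ha 1).mul (hb 3)).mul (hc 2)).mul (hd 0))).add ((((ha 2).mul (hb 0)).mul (hc 1)).mul (hd 3))).sub ((((ha 2).mul (hb 0)).mul (hc 3)).mul (hd 1))).sub ((((ha 2).mul (hb 1)).mul (hc 0)).mul (hd 3))).add ((((ha 2).mul (hb 1)).mul (hc 3)).mul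 (hd 0))).add ((((ha 2).mul (hb 3)).mul (hc 0)).mul (hd 1))).sub ((((ha 2).mul (hb 3)).mul (hc 1)).mul (hd 0))).sub ((((ha 3).mul (hb 0)).mul (hc 1)).mul (hd 2))).add ((((ha 3).mul (hb 0)).mul (hc 2)).mul (hd 1))).add ((((ha 3).mul (hb 1)).mul (hc 0)).mul (hd 2))).sub ((((ha 3).mul (hb 1)).mul (hc 2)).mul (hd 0))).sub ((((ha 3).mul (hb 2)).mul (hc 0)).mul (hd 1))).add ((((ha 3).mul (hb 2)).mul (hc 1)).mul (hd 0)))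

set_option maxHeartbeats 4000000 in
/-- determinant of the fundamental matrix of the linearized system.
`Y_σ(z) = [[f₁,f₂,f₃,f₄],[g₁,g₂,g₃,g₄],[f₁',…],[g₁',…]]` is formed from a solution basis of
`q z f'' + (1+σ) f' + d₁ f + d₂ g = 0`, `q z g'' + k f' + (q+σ) g' + d₃ g = 0`
with leading behaviors `(1, kq/σ)`, `(0, 1+σ/q)`, `(-z)^{-(k²+σ)/q}(1, 1/k)`,
`(-z)^{-σ/q}(0,1)` at `z = 0`.  Then
`det Y_σ(z) = (1+σ/q)((k²+σ)/q)(σ/q)(-z)^{-(k²+2σ)/q-2}` on `(-1,0)`; in particular `Y_σ(z)`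
is invertible iff `σ ∉ {-q, -k², 0}`. -/
theorem stmt_9 (k q : ℝ) (σ d₁ d₂ d₃ : ℂ) (hk : k ≠ 0) (hq : q = 1 - k^2) (hq0 : 0 < q)
    (f g f' g' f'' g'' : Fin 4 → ℝ → ℂ)
    (hdf : ∀ i, ∀ z ∈ Set.Ioo (-1:ℝ) 0, HasDerivAt (f i) (f' i z) z)
    (hdf' : ∀ i, ∀ z ∈ Set.Ioo (-1:ℝ) 0, HasDerivAt (f' i) (f'' i z) z)
    (hdg : ∀ i, ∀ z ∈ Set.Ioo (-1:ℝ) 0, HasDerivAt (g i) (g' i z) z)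
    (hdg' : ∀ i, ∀ z ∈ Set.Ioo (-1:ℝ) 0, HasDerivAt (g' i) (g'' i z) z)
    (hode1 : ∀ i, ∀ z ∈ Set.Ioo (-1:ℝ) 0,
      (q : ℂ) * z * f'' i z + (1 + σ) * f' i z + d₁ * f i z + d₂ * g i z = 0)
    (hode2 : ∀ i, ∀ z ∈ Set.Ioo (-1:ℝ) 0,
      (q : ℂ) * z * g'' i z + (k : ℂ) * f' i z + ((q : ℂ) + σ) * g' i z + d₃ * g i z = 0)
    -- leading-order behavior of the first column `(1, kq/σ) + O(z)`:
    (h1f : Tendsto (f 0) (nhdsWithin 0 (Set.Iio 0)) (nhds 1))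
    (h1g : Tendsto (g 0) (nhdsWithin 0 (Set.Iio 0)) (nhds ((k : ℂ) * q / σ)))
    (h1f' : ∃ c : ℂ, Tendsto (f' 0) (nhdsWithin 0 (Set.Iio 0)) (nhds c))
    (h1g' : ∃ c : ℂ, Tendsto (g' 0) (nhdsWithin 0 (Set.Iio 0)) (nhds c))
    -- leading-order behavior of the second column `(0, 1+σ/q) + O(z)`:
    (h2f : Tendsto (f 1) (nhdsWithin 0 (Set.Iio 0)) (nhds 0))
    (h2g : Tendsto (g 1) (nhdsWithin 0 (Set.Iio 0)) (nhds (1 + σ / (q : ℂ))))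
    (h2f' : ∃ c : ℂ, Tendsto (f' 1) (nhdsWithin 0 (Set.Iio 0)) (nhds c))
    (h2g' : ∃ c : ℂ, Tendsto (g' 1) (nhdsWithin 0 (Set.Iio 0)) (nhds c))
    -- leading-order behavior of the third column `(-z)^{-μ}(1, 1/k) + …`, `μ = (k²+σ)/q`:
    (h3f : Tendsto (fun z : ℝ => ((-z : ℝ) : ℂ) ^ (((k : ℂ)^2 + σ) / (q : ℂ)) * f 2 z)
      (nhdsWithin 0 (Set.Iio 0)) (nhds 1))
    (h3g : Tendsto (fun z : ℝ => ((-z : ℝ) : ℂ) ^ (((k : ℂ)^2 + σ) / (q : ℂ)) * g 2 z)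
      (nhdsWithin 0 (Set.Iio 0)) (nhds (1 / (k : ℂ))))
    (h3f' : Tendsto (fun z : ℝ => ((-z : ℝ) : ℂ) ^ (((k : ℂ)^2 + σ) / (q : ℂ) + 1) * f' 2 z)
      (nhdsWithin 0 (Set.Iio 0)) (nhds (((k : ℂ)^2 + σ) / (q : ℂ))))
    (h3g' : Tendsto (fun z : ℝ => ((-z : ℝ) : ℂ) ^ (((k : ℂ)^2 + σ) / (q : ℂ) + 1) * g' 2 z)
      (nhdsWithin 0 (Set.Iio 0)) (nhds (((k : ℂ)^2 + σ) / ((q : ℂ) * (k : ℂ)))))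
    -- leading-order behavior of the fourth column `(-z)^{-ν}(0, 1) + …`, `ν = σ/q`:
    (h4f : Tendsto (fun z : ℝ => ((-z : ℝ) : ℂ) ^ (σ / (q : ℂ)) * f 3 z)
      (nhdsWithin 0 (Set.Iio 0)) (nhds 0))
    (h4g : Tendsto (fun z : ℝ => ((-z : ℝ) : ℂ) ^ (σ / (q : ℂ)) * g 3 z)
      (nhdsWithin 0 (Set.Iio 0)) (nhds 1))
    (h4f' : Tendsto (fun z : ℝ => ((-z : ℝ) : ℂ) ^ (σ / (q : ℂ) + 1) * f' 3 z)
      (nhdsWithin 0 (Set.Iio 0)) (nhds 0))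
    (h4g' : Tendsto (fun z : ℝ => ((-z : ℝ) : ℂ) ^ (σ / (q : ℂ) + 1) * g' 3 z)
      (nhdsWithin 0 (Set.Iio 0)) (nhds (σ / (q : ℂ)))) :
    ∀ z ∈ Set.Ioo (-1:ℝ) 0,
      (Matrix.of fun i j : Fin 4 => ![f j z, g j z, f' j z, g' j z] i).det
        = (1 + σ / (q : ℂ)) * (((k : ℂ)^2 + σ) / (q : ℂ)) * (σ / (q : ℂ)) *
            ((-z : ℝ) : ℂ) ^ (-(((k : ℂ)^2 + 2*σ) / (q : ℂ)) - 2) ∧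
      (IsUnit (Matrix.of fun i j : Fin 4 => ![f j z, g j z, f' j z, g' j z] i) ↔
        (σ ≠ -(q : ℂ) ∧ σ ≠ -((k : ℂ)^2) ∧ σ ≠ 0)) := by
  classical
  have hqC : (q:ℂ) ≠ 0 := by exact_mod_cast hq0.ne'
  have hkC : (k:ℂ) ≠ 0 := by exact_mod_cast hk
  have hqc : (q:ℂ) = 1 - (k:ℂ)^2 := by rw [hq]; push_cast; ring
  have h1k : (1:ℂ) - (k:ℂ)^2 ≠ 0 := hqc ▸ hqC
  set l := nhdsWithin (0:ℝ) (Set.Iio 0) with hl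
  haveI hlne : l.NeBot := by rw [hl]; exact nhdsLT_neBot 0
  set μ : ℂ := ((k:ℂ)^2 + σ) / (q:ℂ) with hμ
  set ν : ℂ := σ / (q:ℂ) with hν
  set Q : ℂ := ((1:ℂ) + (q:ℂ) + 2*σ) / (q:ℂ) with hQ
  have hQP : Q = μ + ν + 2 := by rw [hQ, hμ, hν, hqc]; field_simp; ring
  set W : ℝ → ℂ := fun t => Dt (fun j => f j t) (fun j => g j t) (fun j => f' j t) (fun j => g' j t)
    with hW
  have hM : ∀ t : ℝ, (Matrix.of fun i j : Fin 4 => ![f j t, g j t, f' j t, g' j t] i).det = W t := by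
    intro t
    have he : (Matrix.of fun i j : Fin 4 => ![f j t, g j t, f' j t, g' j t] i)
        = Matrix.of ![(fun j => f j t), (fun j => g j t), (fun j => f' j t), (fun j => g' j t)] := by
      ext i jj
      fin_cases i <;> rfl
    rw [he, hW]
    rfl
  have hA : ∀ z ∈ Set.Ioo (-1:ℝ) 0, HasDerivAt W (-(Q / (z:ℂ)) * W z) z := by
    intro z hz
    have hz0 : (z:ℂ) ≠ 0 := Complex.ofReal_ne_zero.mpr (ne_of_lt hz.2)
    have hqz : (q:ℂ) * (z:ℂ) ≠ 0 := mul_ne_zero hqC hz0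
    have hf2 : ∀ j, f'' j z = (-((1+σ) * f' j z) - d₁ * f j z - d₂ * g j z) / ((q:ℂ)*(z:ℂ)) := by
      intro j; rw [eq_div_iff hqz]; linear_combination hode1 j z hz
    have hg2 : ∀ j, g'' j z = (-((k:ℂ) * f' j z) - ((q:ℂ)+σ) * g' j z - d₃ * g j z) / ((q:ℂ)*(z:ℂ)) := by
      intro j; rw [eq_div_iff hqz]; linear_combination hode2 j z hz
    have H := Dt_hasDerivAt f g f' g' (fun j => f' j z) (fun j => g' j z)
      (fun j => f'' j z) (fun j => g'' j z) z (fun j => hdf j z hz) (fun j => hdg j z hz)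
      (fun j => hdf' j z hz) (fun j => hdg' j z hz)
    simp only [hW]
    convert H using 1
    simp only [Dt_eq, hf2, hg2, hQ]
    field_simp
    ring
  have hB : ∀ z ∈ Set.Ioo (-1:ℝ) 0,
      HasDerivAt (fun t : ℝ => Complex.exp ((Real.log (-t) : ℂ) * Q) * W t) 0 z := by
    intro z hz
    have hzne : z ≠ 0 := ne_of_lt hz.2
    have hz0 : (z:ℂ) ≠ 0 := Complex.ofReal_ne_zero.mpr hzne
    have hnz : -z ≠ 0 := neg_ne_zero.mpr hzne
    have h1 : HasDerivAt (fun t : ℝ => Real.log (-t)) ((-z)⁻¹ * (-1)) z :=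
      (Real.hasDerivAt_log hnz).comp z (hasDerivAt_neg' z)
    have h2 : HasDerivAt (fun t : ℝ => ((Real.log (-t) : ℝ) : ℂ))
        ((((-z)⁻¹ * (-1) : ℝ)) : ℂ) z := h1.ofReal_comp
    have h3 := (h2.mul_const Q).cexp
    have h4 := h3.mul (hA z hz)
    refine h4.congr_deriv ?_
    have hc : ((((-z)⁻¹ * (-1) : ℝ)) : ℂ) = 1/(z:ℂ) := by
      push_cast
      field_simp
    rw [hc]
    ring
  have hC : ∀ x ∈ Set.Ioo (-1:ℝ) 0, ∀ y ∈ Set.Ioo (-1:ℝ) 0,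
      Complex.exp ((Real.log (-x) : ℂ) * Q) * W x
        = Complex.exp ((Real.log (-y) : ℂ) * Q) * W y := by
    intro x hx y hy
    exact (convex_Ioo (-1:ℝ) 0).is_const_of_fderivWithin_eq_zero
      (fun t ht => ((hB t ht).differentiableAt).differentiableWithinAt)
      (fun t ht => by
        rw [fderivWithin_of_isOpen isOpen_Ioo ht, ← toSpanSingleton_deriv, (hB t ht).deriv]
        ext
        simp) hx hy
  have hIoo : ∀ᶠ t in l, t ∈ Set.Ioo (-1:ℝ) 0 := by
    have h1 : ∀ᶠ t in l, (-1:ℝ) < t := by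
      rw [hl]
      exact eventually_nhdsWithin_of_eventually_nhds (eventually_gt_nhds (by norm_num))
    have h2 : ∀ᶠ t in l, t < 0 := by
      rw [hl]; exact eventually_mem_nhdsWithin
    filter_upwards [h1, h2] with t ht1 ht2
    exact ⟨ht1, ht2⟩
  have ht0 : Filter.Tendsto (fun t : ℝ => ((-t : ℝ) : ℂ)) l (nhds 0) := by
    have hcont : Continuous (fun t : ℝ => ((-t : ℝ) : ℂ)) := by fun_prop
    rw [hl]
    simpa using (hcont.tendsto 0).mono_left nhdsWithin_le_nhds
  have hRa : ∀ j, Filter.Tendsto (fun t => (![f 0 t, f 1 t, ((-t : ℝ) : ℂ) ^ μ * f 2 t,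
      ((-t : ℝ) : ℂ) ^ ν * f 3 t] : Fin 4 → ℂ) j) l (nhds ((![1, 0, 1, 0] : Fin 4 → ℂ) j)) := by
    intro j
    fin_cases j
    · simpa using h1f
    · simpa using h2f
    · simpa using h3f
    · simpa using h4f
  have hRb : ∀ j, Filter.Tendsto (fun t => (![g 0 t, g 1 t, ((-t : ℝ) : ℂ) ^ μ * g 2 t,
      ((-t : ℝ) : ℂ) ^ ν * g 3 t] : Fin 4 → ℂ) j) l
      (nhds ((![(k:ℂ) * q / σ, 1 + ν, 1/(k:ℂ), 1] : Fin 4 → ℂ) j)) := by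
    intro j
    fin_cases j
    · simpa using h1g
    · simpa using h2g
    · simpa using h3g
    · simpa using h4g
  have hRc : ∀ j, Filter.Tendsto (fun t => (![((-t : ℝ) : ℂ) * f' 0 t, ((-t : ℝ) : ℂ) * f' 1 t,
      ((-t : ℝ) : ℂ) ^ (μ+1) * f' 2 t, ((-t : ℝ) : ℂ) ^ (ν+1) * f' 3 t] : Fin 4 → ℂ) j) l
      (nhds ((![0, 0, μ, 0] : Fin 4 → ℂ) j)) := by
    obtain ⟨c1, hc1⟩ := h1f'
    obtain ⟨c2, hc2⟩ := h2f'
    intro j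
    fin_cases j
    · simpa using ht0.mul hc1
    · simpa using ht0.mul hc2
    · simpa using h3f'
    · simpa using h4f'
  have hRd : ∀ j, Filter.Tendsto (fun t => (![((-t : ℝ) : ℂ) * g' 0 t, ((-t : ℝ) : ℂ) * g' 1 t,
      ((-t : ℝ) : ℂ) ^ (μ+1) * g' 2 t, ((-t : ℝ) : ℂ) ^ (ν+1) * g' 3 t] : Fin 4 → ℂ) j) l
      (nhds ((![0, 0, ((k:ℂ)^2 + σ) / ((q:ℂ) * (k:ℂ)), ν] : Fin 4 → ℂ) j)) := by
    obtain ⟨c1, hc1⟩ := h1g'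
    obtain ⟨c2, hc2⟩ := h2g'
    intro j
    fin_cases j
    · simpa using ht0.mul hc1
    · simpa using ht0.mul hc2
    · simpa using h3g'
    · simpa using h4g'
  have hLval : Dt (![1, 0, 1, 0]) (![(k:ℂ) * q / σ, 1 + ν, 1/(k:ℂ), 1])
      (![0, 0, μ, 0]) (![0, 0, ((k:ℂ)^2 + σ) / ((q:ℂ) * (k:ℂ)), ν]) = (1 + ν) * μ * ν := by
    simp [Dt_eq, Matrix.cons_val_two, Matrix.cons_val_three, Matrix.head_cons, Matrix.tail_cons]
    try ring
  have hEq : ∀ᶠ t in l, Complex.exp ((Real.log (-t) : ℂ) * Q) * W t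
      = Dt (![f 0 t, f 1 t, ((-t : ℝ) : ℂ) ^ μ * f 2 t, ((-t : ℝ) : ℂ) ^ ν * f 3 t])
          (![g 0 t, g 1 t, ((-t : ℝ) : ℂ) ^ μ * g 2 t, ((-t : ℝ) : ℂ) ^ ν * g 3 t])
          (![((-t : ℝ) : ℂ) * f' 0 t, ((-t : ℝ) : ℂ) * f' 1 t,
            ((-t : ℝ) : ℂ) ^ (μ+1) * f' 2 t, ((-t : ℝ) : ℂ) ^ (ν+1) * f' 3 t])
          (![((-t : ℝ) : ℂ) * g' 0 t, ((-t : ℝ) : ℂ) * g' 1 t,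
            ((-t : ℝ) : ℂ) ^ (μ+1) * g' 2 t, ((-t : ℝ) : ℂ) ^ (ν+1) * g' 3 t]) := by
    filter_upwards [hIoo] with t ht
    have hnt : (0:ℝ) < -t := by have := ht.2; linarith
    have hs : ((-t:ℝ):ℂ) ≠ 0 := Complex.ofReal_ne_zero.mpr hnt.ne'
    have hexp : Complex.exp ((Real.log (-t) : ℂ) * Q) = ((-t:ℝ):ℂ) ^ Q := by
      rw [Complex.cpow_def_of_ne_zero hs, Complex.ofReal_log hnt.le]
    have hs2 : ((-t:ℝ):ℂ) ^ (2:ℂ) = ((-t:ℝ):ℂ) * ((-t:ℝ):ℂ) := by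
      rw [show (2:ℂ) = ((2:ℕ):ℂ) by norm_num, Complex.cpow_natCast]
      ring
    rw [hexp, hQP, hW]
    simp only [Dt_eq, Matrix.cons_val_zero, Matrix.cons_val_one, Matrix.head_cons,
      Matrix.cons_val_two, Matrix.cons_val_three, Matrix.tail_cons]
    rw [Complex.cpow_add (μ+ν) 2 hs, Complex.cpow_add μ ν hs, hs2,
        Complex.cpow_add μ 1 hs, Complex.cpow_add ν 1 hs, Complex.cpow_one]
    ring
  have hD2 : Filter.Tendsto (fun t : ℝ => Complex.exp ((Real.log (-t) : ℂ) * Q) * W t) l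
      (nhds ((1 + ν) * μ * ν)) := by
    have h := Dt_tendsto
      (fun t => ![f 0 t, f 1 t, ((-t : ℝ) : ℂ) ^ μ * f 2 t, ((-t : ℝ) : ℂ) ^ ν * f 3 t])
      (fun t => ![g 0 t, g 1 t, ((-t : ℝ) : ℂ) ^ μ * g 2 t, ((-t : ℝ) : ℂ) ^ ν * g 3 t])
      (fun t => ![((-t : ℝ) : ℂ) * f' 0 t, ((-t : ℝ) : ℂ) * f' 1 t,
        ((-t : ℝ) : ℂ) ^ (μ+1) * f' 2 t, ((-t : ℝ) : ℂ) ^ (ν+1) * f' 3 t])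
      (fun t => ![((-t : ℝ) : ℂ) * g' 0 t, ((-t : ℝ) : ℂ) * g' 1 t,
        ((-t : ℝ) : ℂ) ^ (μ+1) * g' 2 t, ((-t : ℝ) : ℂ) ^ (ν+1) * g' 3 t])
      (![1, 0, 1, 0]) (![(k:ℂ) * q / σ, 1 + ν, 1/(k:ℂ), 1])
      (![0, 0, μ, 0]) (![0, 0, ((k:ℂ)^2 + σ) / ((q:ℂ) * (k:ℂ)), ν]) hRa hRb hRc hRd
    rw [hLval] at h
    exact h.congr' (hEq.mono fun t ht => ht.symm)
  intro z hz
  have hzlt : z < 0 := hz.2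
  have hnz : (0:ℝ) < -z := by linarith
  have hs : ((-z:ℝ):ℂ) ≠ 0 := Complex.ofReal_ne_zero.mpr hnz.ne'
  have hexp : Complex.exp ((Real.log (-z) : ℂ) * Q) = ((-z:ℝ):ℂ) ^ Q := by
    rw [Complex.cpow_def_of_ne_zero hs, Complex.ofReal_log hnz.le]
  have hΦz : ((-z:ℝ):ℂ) ^ Q * W z = (1 + ν) * μ * ν := by
    rw [← hexp]
    refine tendsto_nhds_unique ?_ hD2
    refine Filter.Tendsto.congr' ?_ tendsto_const_nhds
    filter_upwards [hIoo] with t ht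
    exact hC z hz t ht
  have hEneg : -(((k:ℂ)^2 + 2*σ) / (q:ℂ)) - 2 = -Q := by
    rw [hQ, hqc]
    field_simp
    ring
  have hsQ : ((-z:ℝ):ℂ) ^ Q ≠ 0 := by
    intro h0; exact hs ((Complex.cpow_eq_zero_iff _ _).mp h0).1
  have hWz : W z = (1 + ν) * μ * ν * ((-z:ℝ):ℂ) ^ (-(((k:ℂ)^2 + 2*σ) / (q:ℂ)) - 2) := by
    rw [hEneg, Complex.cpow_neg, ← hΦz,
      mul_comm (((-z:ℝ):ℂ) ^ Q) (W z), mul_assoc, mul_inv_cancel₀ hsQ, mul_one]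
  constructor
  · rw [hM z, hWz]
  · rw [Matrix.isUnit_iff_isUnit_det, isUnit_iff_ne_zero, hM z, hWz]
    have hse : ((-z:ℝ):ℂ) ^ (-(((k:ℂ)^2 + 2*σ) / (q:ℂ)) - 2) ≠ 0 := by
      intro h0; exact hs ((Complex.cpow_eq_zero_iff _ _).mp h0).1
    constructor
    · intro h
      refine ⟨?_, ?_, ?_⟩
      · rintro rfl
        apply h
        rw [hν, hμ, show (1 + -(q:ℂ)/(q:ℂ) : ℂ) = 0 by field_simp; ring]
        ring
      · rintro rfl
        apply h
        rw [hμ, show (((k:ℂ)^2 + -(k:ℂ)^2)/(q:ℂ) : ℂ) = 0 by simp]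
        ring
      · rintro rfl
        apply h
        rw [hν, show ((0:ℂ)/(q:ℂ)) = 0 by simp]
        ring
    · rintro ⟨h1, h2, h3⟩
      refine mul_ne_zero (mul_ne_zero (mul_ne_zero ?_ ?_) ?_) hse
      · rw [hν, show (1 + σ/(q:ℂ)) = ((q:ℂ) + σ)/(q:ℂ) by field_simp]
        exact div_ne_zero (fun h0 => h1 (by linear_combination h0)) hqC
      · rw [hμ]
        exact div_ne_zero (fun h0 => h2 (by linear_combination h0)) hqC
      · rw [hν]
        exact div_ne_zero h3 hqC
end

section
/- Let q = 1-k² with 0 < k < 1, and σ ∈ ℂ with Re σ > -q. Let V : [-1,0] → ℂ be continuous with |V(z)| ≤ M. Define the kernel P(z,z') = (1 - ((-z')/(-z))^{σ/q}) V(z')/σ for -1 ≤ z ≤ z' < 0. Then |P(z,z')| ≤ (2M/|σ|)(1 + ((-z')/(-z))^{Re σ/q}) and the Volterra series ψ(z) = 1 + Σ_{n≥1} ∫_z^0 ∫_{z₁}^0 ⋯ ∫_{z_{n-1}}^0 P(z,z₁) P(z₁,z₂) ⋯ P(z_{n-1}, z_n) dz_n ⋯ dz₁ converges absolutely for every z ∈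 [-1,0), and the resulting function ψ satisfies ψ(z) → 1 as z → 0⁻. -/
open Filter MeasureTheory intervalIntegral Nat

lemma intInt_neg_rpow (z : ℝ) {β : ℝ} (hβ : -1 < β) :
    IntervalIntegrable (fun x => (-x) ^ β) volume z 0 := by
  have h := intervalIntegral.intervalIntegrable_rpow' (a := -z) (b := -0) hβ
  simpa using (IntervalIntegrable.iff_comp_neg (f := fun x : ℝ => x ^ β)).mp h

lemma intVal_neg_rpow {z β : ℝ} (hβ : -1 < β) :
    ∫ x in z..0, (-x) ^ β = (-z) ^ (β + 1) / (β + 1) := by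
  have h := intervalIntegral.integral_comp_neg (a := z) (b := 0) (fun x => x ^ β)
  simp only [neg_zero] at h
  rw [h, integral_rpow (Or.inl hβ), Real.zero_rpow (by linarith), sub_zero]

set_option maxHeartbeats 800000 in
/-- Volterra construction of the outgoing solution for the single linear wave
equation. With `q = 1-k²`, `Re σ > -q`, `|V| ≤ M`, and kernel
`P(z,z') = (1 - ((-z')/(-z))^{σ/q}) V(z')/σ`, the kernel bound
`‖P(z,z')‖ ≤ (2M/|σ|)(1 + ((-z')/(-z))^{Re σ/q})` holds for `-1 ≤ z ≤ z' < 0`, the Volterra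
series `Σ Q_n` converges absolutely for `z ∈ [-1,0)`, and `ψ(z) = Σ Q_n(z) → 1` as `z → 0⁻`. -/
theorem stmt_13 (k M q : ℝ) (σ : ℂ) (hk : 0 < k) (hk1 : k < 1)
    (hq : q = 1 - k^2) (hσ : -q < σ.re) (hσ0 : σ ≠ 0) (hM : 0 ≤ M)
    (V : ℝ → ℂ) (hV : ContinuousOn V (Set.Icc (-1:ℝ) 0))
    (hVb : ∀ z ∈ Set.Icc (-1:ℝ) 0, ‖V z‖ ≤ M)
    (P : ℝ → ℝ → ℂ)
    (hP : ∀ z z' : ℝ,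
      P z z' = (1 - (((-z' : ℝ) : ℂ) / ((-z : ℝ) : ℂ)) ^ (σ / (q : ℂ))) * V z' / σ)
    (Q : ℕ → ℝ → ℂ) (hQ0 : ∀ z, Q 0 z = 1)
    (hQs : ∀ n z, Q (n+1) z = ∫ z' in z..0, P z z' * Q n z') :
    (∀ z z' : ℝ, -1 ≤ z → z ≤ z' → z' < 0 →
      ‖P z z'‖ ≤ (2 * M / ‖σ‖) * (1 + ((-z') / (-z)) ^ (σ.re / q))) ∧
    (∀ z ∈ Set.Ico (-1:ℝ) 0, Summable fun n => ‖Q n z‖) ∧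
    Tendsto (fun z => ∑' n, Q n z) (nhdsWithin 0 (Set.Iio 0)) (nhds 1) := by
  have hq0 : 0 < q := by nlinarith
  set α : ℝ := σ.re / q with hα
  have hα1 : -1 < α := by
    rw [hα, lt_div_iff₀ hq0]; linarith
  have hα1' : 0 < 1 + α := by linarith
  have hσn : 0 < ‖σ‖ := norm_pos_iff.mpr hσ0
  set B : ℝ := 2 * M / ‖σ‖ with hB
  have hB0 : 0 ≤ B := by positivity
  -- Part 1 : kernel bound
  have part1 : ∀ z z' : ℝ, -1 ≤ z → z ≤ z' → z' < 0 →
      ‖P z z'‖ ≤ B * (1 + ((-z') / (-z)) ^ α) := by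
    intro z z' h1 h2 h3
    have hz0 : z < 0 := lt_of_le_of_lt h2 h3
    have hmz : 0 < -z := by linarith
    have hmz' : 0 < -z' := by linarith
    set r : ℝ := (-z') / (-z) with hr
    have hr0 : 0 < r := div_pos hmz' hmz
    have hcast : ((-z' : ℝ) : ℂ) / ((-z : ℝ) : ℂ) = ((r : ℝ) : ℂ) := by
      rw [hr]; push_cast; ring
    have hre : (σ / (q : ℂ)).re = α := by
      rw [hα, Complex.div_ofReal_re]
    have hnorm : ‖((r : ℝ) : ℂ) ^ (σ / (q : ℂ))‖ = r ^ α := by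
      rw [Complex.norm_cpow_eq_rpow_re_of_pos hr0, hre]
    have hz'mem : z' ∈ Set.Icc (-1:ℝ) 0 := ⟨le_trans h1 h2, le_of_lt h3⟩
    have hVz : ‖V z'‖ ≤ M := hVb z' hz'mem
    rw [hP, hcast]
    rw [norm_div, norm_mul]
    have h1s : ‖(1 : ℂ) - ((r : ℝ) : ℂ) ^ (σ / (q : ℂ))‖ ≤ 1 + r ^ α := by
      calc ‖(1 : ℂ) - ((r : ℝ) : ℂ) ^ (σ / (q : ℂ))‖
          ≤ ‖(1 : ℂ)‖ + ‖((r : ℝ) : ℂ) ^ (σ / (q : ℂ))‖ := norm_sub_le _ _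
        _ = 1 + r ^ α := by rw [norm_one, hnorm]
    have hrα : 0 ≤ r ^ α := Real.rpow_nonneg hr0.le α
    calc ‖(1 : ℂ) - ((r : ℝ) : ℂ) ^ (σ / (q : ℂ))‖ * ‖V z'‖ / ‖σ‖
        ≤ (1 + r ^ α) * M / ‖σ‖ := by
          apply div_le_div_of_nonneg_right ?_ hσn.le
          exact mul_le_mul h1s hVz (norm_nonneg _) (by linarith)
      _ ≤ B * (1 + r ^ α) := by
          rw [hB, div_mul_eq_mul_div, div_le_div_iff₀ hσn hσn]
          nlinarith [mul_nonneg (mul_nonneg hM hrα) hσn.le, mul_nonneg hM hσn.le]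
  -- constants
  set c : ℝ := max 1 (1 / (1 + α)) with hc
  have hc1 : 1 ≤ c := le_max_left _ _
  have hc2 : 1 / (1 + α) ≤ c := le_max_right _ _
  set A : ℝ := B * (1 + c) with hA
  have hA0 : 0 ≤ A := by
    have h : (0:ℝ) ≤ 1 + c := by linarith
    exact mul_nonneg hB0 h
  have key : ∀ n : ℕ, (n : ℝ) + 1 ≤ c * ((n : ℝ) + 1 + α) := by
    intro n
    have hn0 : (0:ℝ) ≤ n := Nat.cast_nonneg n
    rcases le_or_gt 0 α with h | h
    · nlinarith
    · have h1 : (n : ℝ) + 1 ≤ (1 / (1 + α)) * ((n : ℝ) + 1 + α) := by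
        rw [one_div, inv_mul_eq_div, le_div_iff₀ hα1']
        nlinarith
      have h2 : (1 / (1 + α)) * ((n : ℝ) + 1 + α) ≤ c * ((n : ℝ) + 1 + α) := by
        apply mul_le_mul_of_nonneg_right hc2
        linarith
      linarith
  -- main inductive bound
  have bound : ∀ n : ℕ, ∀ z ∈ Set.Icc (-1:ℝ) 0, ‖Q n z‖ ≤ A ^ n * (-z) ^ n / (n ! : ℝ) := by
    intro n
    induction n with
    | zero => intro z hz; simp [hQ0]
    | succ n ih =>
      intro z hz
      rcases eq_or_lt_of_le hz.2 with h0 | hz0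
      · subst h0
        rw [hQs, intervalIntegral.integral_same]
        simp
      · have hz1 : -1 ≤ z := hz.1
        have hmz : 0 < -z := by linarith
        have hfn : (0:ℝ) < (n ! : ℝ) := Nat.cast_pos.mpr (Nat.factorial_pos n)
        have hfn1 : (0:ℝ) < ((n+1)! : ℝ) := Nat.cast_pos.mpr (Nat.factorial_pos (n+1))
        set g : ℝ → ℝ := fun x =>
          B * A ^ n / (n ! : ℝ) * ((-x) ^ (n : ℝ) + (-z) ^ (-α) * (-x) ^ ((n : ℝ) + α)) with hg
        have hn0 : (0:ℝ) ≤ n := Nat.cast_nonneg n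
        have hnα : -1 < (n : ℝ) + α := by linarith
        have hnn : -1 < (n : ℝ) := by linarith
        have hgint : IntervalIntegrable g volume z 0 := by
          apply IntervalIntegrable.const_mul
          exact (intInt_neg_rpow z hnn).add ((intInt_neg_rpow z hnα).const_mul _)
        have hae : ∀ᵐ t ∂(volume.restrict (Set.uIoc z 0)), ‖P z t * Q n t‖ ≤ g t := by
          have hne : ∀ᵐ t : ℝ ∂volume, t ≠ 0 := by
            simp only [ne_eq, MeasureTheory.ae_iff, not_not,
              Set.setOf_eq_eq_singleton]
            exact Real.volume_singleton
          filter_upwards [MeasureTheory.ae_restrict_mem measurableSet_uIoc,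
            MeasureTheory.ae_restrict_of_ae hne] with t htm htne
          rw [Set.uIoc_of_le hz.2] at htm
          have htz : z < t := htm.1
          have ht0 : t < 0 := lt_of_le_of_ne htm.2 htne
          have hmt : 0 < -t := by linarith
          have hPb := part1 z t hz1 htz.le ht0
          have hQb := ih t ⟨by linarith, ht0.le⟩
          have hQb' : ‖Q n t‖ ≤ A ^ n * (-t) ^ (n : ℝ) / (n ! : ℝ) := by
            rwa [Real.rpow_natCast]
          calc ‖P z t * Q n t‖ = ‖P z t‖ * ‖Q n t‖ := norm_mul _ _
            _ ≤ (B * (1 + ((-t) / (-z)) ^ α)) * (A ^ n * (-t) ^ (n : ℝ) / (n ! : ℝ)) := by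
                apply mul_le_mul hPb hQb' (norm_nonneg _)
                have h1 : 0 ≤ ((-t) / (-z)) ^ α := Real.rpow_nonneg (by positivity) _
                have h2 : (0:ℝ) ≤ 1 + ((-t) / (-z)) ^ α := by linarith
                exact mul_nonneg hB0 h2
            _ = g t := by
                rw [hg]
                have hdiv : ((-t) / (-z)) ^ α = (-t) ^ α * (-z) ^ (-α) := by
                  rw [Real.div_rpow hmt.le hmz.le, Real.rpow_neg hmz.le, div_eq_mul_inv]
                have hmul : (-t) ^ ((n : ℝ) + α) = (-t) ^ (n : ℝ) * (-t) ^ α := by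
                  rw [Real.rpow_add hmt]
                rw [hdiv]
                simp only [hmul]
                ring
        have hval : |∫ t in z..0, g t| = B * A ^ n / (n ! : ℝ) *
            ((-z) ^ ((n : ℝ) + 1) / ((n : ℝ) + 1) +
             (-z) ^ (-α) * ((-z) ^ ((n : ℝ) + α + 1) / ((n : ℝ) + α + 1))) := by
          rw [hg]
          rw [intervalIntegral.integral_const_mul,
            intervalIntegral.integral_add (intInt_neg_rpow z hnn)
              ((intInt_neg_rpow z hnα).const_mul _),
            intervalIntegral.integral_const_mul, intVal_neg_rpow hnn, intVal_neg_rpow hnα]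
          have h1 : 0 ≤ (-z) ^ ((n : ℝ) + 1) / ((n : ℝ) + 1) := by
            apply div_nonneg (Real.rpow_nonneg hmz.le _); linarith
          have h2 : 0 ≤ (-z) ^ (-α) * ((-z) ^ ((n : ℝ) + α + 1) / ((n : ℝ) + α + 1)) := by
            apply mul_nonneg (Real.rpow_nonneg hmz.le _)
            apply div_nonneg (Real.rpow_nonneg hmz.le _); linarith
          exact abs_of_nonneg (mul_nonneg
            (div_nonneg (mul_nonneg hB0 (pow_nonneg hA0 n)) hfn.le) (by linarith))
        have hineq : B * A ^ n / (n ! : ℝ) *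
            ((-z) ^ ((n : ℝ) + 1) / ((n : ℝ) + 1) +
             (-z) ^ (-α) * ((-z) ^ ((n : ℝ) + α + 1) / ((n : ℝ) + α + 1)))
            ≤ A ^ (n + 1) * (-z) ^ (n + 1) / ((n+1)! : ℝ) := by
          have hna : (0:ℝ) < (n : ℝ) + 1 + α := by linarith
          have hn1 : (0:ℝ) < (n : ℝ) + 1 := by linarith
          have e1 : (-z) ^ (-α) * ((-z) ^ ((n : ℝ) + α + 1) / ((n : ℝ) + α + 1))
              = (-z) ^ ((n : ℝ) + 1) / ((n : ℝ) + α + 1) := by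
            rw [mul_div_assoc', ← Real.rpow_add hmz]
            ring_nf
          have hX : (-z) ^ ((n : ℝ) + 1) = (-z) ^ (n + 1) := by
            rw [show ((n : ℝ) + 1) = ((n + 1 : ℕ) : ℝ) by push_cast; ring,
              Real.rpow_natCast]
          have hfrac : 1 / ((n : ℝ) + 1) + 1 / ((n : ℝ) + 1 + α) ≤ (1 + c) / ((n : ℝ) + 1) := by
            have h3 : 1 / ((n : ℝ) + 1 + α) ≤ c / ((n : ℝ) + 1) := by
              rw [div_le_div_iff₀ hna hn1, one_mul]
              have := key n
              nlinarith
            have h4 : (1 + c) / ((n : ℝ) + 1) = 1 / ((n : ℝ) + 1) + c / ((n : ℝ) + 1) := by ring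
            linarith
          have hXnn : (0:ℝ) ≤ (-z) ^ (n + 1) := by positivity
          have hfact : ((n + 1)! : ℝ) = ((n : ℝ) + 1) * (n ! : ℝ) := by
            rw [Nat.factorial_succ]; push_cast; ring
          have hmul0 : (0:ℝ) ≤ B * A ^ n / (n ! : ℝ) * (-z) ^ (n + 1) :=
            mul_nonneg (div_nonneg (mul_nonneg hB0 (pow_nonneg hA0 n)) hfn.le) hXnn
          have e2 : B * A ^ n / (n ! : ℝ) *
              ((-z) ^ ((n : ℝ) + 1) / ((n : ℝ) + 1) +
               (-z) ^ (-α) * ((-z) ^ ((n : ℝ) + α + 1) / ((n : ℝ) + α + 1)))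
              = B * A ^ n / (n ! : ℝ) * (-z) ^ (n + 1) *
                (1 / ((n : ℝ) + 1) + 1 / ((n : ℝ) + 1 + α)) := by
            rw [e1, hX]
            have : ((n:ℝ) + α + 1) = ((n:ℝ) + 1 + α) := by ring
            rw [this]
            ring
          have e3 : A ^ (n + 1) * (-z) ^ (n + 1) / ((n+1)! : ℝ)
              = B * A ^ n / (n ! : ℝ) * (-z) ^ (n + 1) * ((1 + c) / ((n : ℝ) + 1)) := by
            rw [hfact, pow_succ, hA]
            field_simp
          rw [e2, e3]
          exact mul_le_mul_of_nonneg_left hfrac hmul0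
        calc ‖Q (n+1) z‖ = ‖∫ t in z..0, P z t * Q n t‖ := by rw [hQs]
          _ ≤ |∫ t in z..0, g t| := intervalIntegral.norm_integral_le_abs_of_norm_le hae hgint
          _ = _ := hval
          _ ≤ _ := hineq
  -- Part 2 : summability
  have part2 : ∀ z ∈ Set.Ico (-1:ℝ) 0, Summable fun n => ‖Q n z‖ := by
    intro z hz
    have hmz : 0 ≤ -z := by linarith [hz.2]
    have hmz1 : -z ≤ 1 := by linarith [hz.1]
    apply Summable.of_nonneg_of_le (fun n => norm_nonneg _) (fun n => ?_)
      (Real.summable_pow_div_factorial A)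
    calc ‖Q n z‖ ≤ A ^ n * (-z) ^ n / (n ! : ℝ) := bound n z ⟨hz.1, hz.2.le⟩
      _ ≤ A ^ n * 1 / (n ! : ℝ) := by
          have hfn : (0:ℝ) < (n ! : ℝ) := Nat.cast_pos.mpr (Nat.factorial_pos n)
          have h1 : (-z) ^ n ≤ 1 := pow_le_one₀ hmz hmz1
          have h2 : A ^ n * (-z) ^ n ≤ A ^ n * 1 :=
            mul_le_mul_of_nonneg_left h1 (pow_nonneg hA0 n)
          exact div_le_div_of_nonneg_right h2 hfn.le
      _ = A ^ n / (n ! : ℝ) := by rw [mul_one]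
  refine ⟨part1, part2, ?_⟩
  -- Part 3 : limit
  have part2' : ∀ z ∈ Set.Ico (-1:ℝ) 0, Summable fun n => Q n z :=
    fun z hz => (part2 z hz).of_norm
  have hCsum : Summable (fun n : ℕ => A ^ (n+1) / ((n+1)! : ℝ)) :=
    (summable_nat_add_iff 1).mpr (Real.summable_pow_div_factorial A)
  set C : ℝ := ∑' n : ℕ, A ^ (n+1) / ((n+1)! : ℝ) with hCdef
  have hbnd : ∀ z ∈ Set.Ioo (-1:ℝ) 0, ‖(∑' n, Q n z) - 1‖ ≤ (-z) * C := by
    intro z hz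
    have hzI : z ∈ Set.Ico (-1:ℝ) 0 := ⟨hz.1.le, hz.2⟩
    have hmz : 0 ≤ -z := by linarith [hz.2]
    have hmz1 : -z ≤ 1 := by linarith [hz.1]
    have hs := part2' z hzI
    have hsn := part2 z hzI
    have h1 : (∑' n, Q n z) = 1 + ∑' n : ℕ, Q (n+1) z := by
      rw [Summable.tsum_eq_zero_add hs, hQ0]
    rw [h1, add_sub_cancel_left]
    have hsn1 : Summable (fun n : ℕ => ‖Q (n+1) z‖) := (summable_nat_add_iff 1).mpr hsn
    calc ‖∑' n : ℕ, Q (n+1) z‖ ≤ ∑' n : ℕ, ‖Q (n+1) z‖ := norm_tsum_le_tsum_norm hsn1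
      _ ≤ ∑' n : ℕ, (-z) * (A ^ (n+1) / ((n+1)! : ℝ)) := by
          apply Summable.tsum_le_tsum _ hsn1 (hCsum.mul_left _)
          intro n
          have hfn : (0:ℝ) < ((n+1)! : ℝ) := Nat.cast_pos.mpr (Nat.factorial_pos (n+1))
          calc ‖Q (n+1) z‖ ≤ A ^ (n+1) * (-z) ^ (n+1) / ((n+1)! : ℝ) :=
                bound (n+1) z ⟨hzI.1, hz.2.le⟩
            _ ≤ (-z) * (A ^ (n+1) / ((n+1)! : ℝ)) := by
                have h2 : (-z) ^ (n+1) ≤ -z := by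
                  calc (-z) ^ (n+1) = (-z) ^ n * (-z) := pow_succ _ _
                    _ ≤ 1 * (-z) := mul_le_mul_of_nonneg_right (pow_le_one₀ hmz hmz1) hmz
                    _ = -z := one_mul _
                have h3 : A ^ (n+1) * (-z) ^ (n+1) ≤ A ^ (n+1) * (-z) :=
                  mul_le_mul_of_nonneg_left h2 (pow_nonneg hA0 _)
                rw [show (-z) * (A ^ (n+1) / ((n+1)! : ℝ)) = A ^ (n+1) * (-z) / ((n+1)! : ℝ)
                  by ring]
                exact div_le_div_of_nonneg_right h3 hfn.le
      _ = (-z) * C := by rw [tsum_mul_left]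
  have hev : ∀ᶠ z in nhdsWithin (0:ℝ) (Set.Iio 0), z ∈ Set.Ioo (-1:ℝ) 0 := by
    filter_upwards [(eventually_gt_nhds (by norm_num : (-1:ℝ) < 0)).filter_mono
      nhdsWithin_le_nhds, self_mem_nhdsWithin] with z h1 h2
    exact ⟨h1, h2⟩
  have hlim : Tendsto (fun z : ℝ => (-z) * C) (nhdsWithin 0 (Set.Iio 0)) (nhds 0) := by
    have h : Tendsto (fun z : ℝ => (-z) * C) (nhds 0) (nhds 0) := by
      have h2 : Continuous (fun z : ℝ => (-z) * C) := by continuity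
      simpa using h2.tendsto (0:ℝ)
    exact h.mono_left nhdsWithin_le_nhds
  rw [← tendsto_sub_nhds_zero_iff]
  exact squeeze_zero_norm' (hev.mono hbnd) hlim
end

section
/- Let k, q = 1-k², λ₀ ∈ ℝ, and consider the coupled system of algebraic equations in unknowns a₁, A₁ given σ ∈ ℂ with σ ∉ {k², -q}: (1+σ) a₁ = -(k²σ + k²(2+k²)) λ₀ (σ+1)/(σ-k²) a₀ - (2kλ₀(1+k²)/(σ-k²))(σ+1) A₀ and (q+σ) A₁ + k a₁ = k² λ₀ A₀. If (a₀, A₀) = (1, k q/σ) with σ ≠ 0, then a₁ = -k²λ₀(σ+2+k²)/(σ-k²) - 2k²λ₀(1+k²)q/((σ-k²)σ) and A₁ = λ₀ k³ (σ + k² + 2)/((σ-k²)σ), and both are holomorphic in σ on the strip {-1-β ≤ Re σ ≤ -β} for any β ∈ (0,1/2) (with k small enough that k² < β); in particular the factor (1+σ) cancels so that a₁, A₁ have no pole at σ = -1. -/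
/-- key cancellation: with `q = 1-k²`, the explicit values
`a₁ = -k²l₀(σ+2+k²)/(σ-k²) - 2k²l₀(1+k²)q/((σ-k²)σ)` and
`A₁ = l₀k³(σ+k²+2)/((σ-k²)σ)` solve the coupled algebraic system
`(1+σ)a₁ = -(k²σ+k²(2+k²))l₀(σ+1)/(σ-k²)·a₀ - (2kl₀(1+k²)/(σ-k²))(σ+1)·A₀`,
`(q+σ)A₁ + k a₁ = k²l₀ A₀` with `(a₀,A₀) = (1, kq/σ)`; they are the unique solution when
`1+σ ≠ 0`; and both are holomorphic in `σ` on the strip `{-1-β ≤ Re σ ≤ -β}` (with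
`k² < β`, `β ∈ (0,1/2)`), so in particular the factor `(1+σ)` cancels and there is no pole
at `σ = -1`. -/
theorem stmt_14 (k l₀ β q : ℝ) (hk : k ≠ 0) (hβ : β ∈ Set.Ioo (0:ℝ) (1/2))
    (hkβ : k^2 < β) (hq : q = 1 - k^2) :
    let a1F : ℂ → ℂ := fun σ =>
      -(k : ℂ)^2 * (l₀ : ℂ) * (σ + 2 + (k : ℂ)^2) / (σ - (k : ℂ)^2)
        - 2 * (k : ℂ)^2 * (l₀ : ℂ) * (1 + (k : ℂ)^2) * (q : ℂ) / ((σ - (k : ℂ)^2) * σ)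
    let A1F : ℂ → ℂ := fun σ =>
      (l₀ : ℂ) * (k : ℂ)^3 * (σ + (k : ℂ)^2 + 2) / ((σ - (k : ℂ)^2) * σ)
    (∀ σ : ℂ, σ ≠ 0 → σ ≠ (k : ℂ)^2 → σ ≠ -(q : ℂ) →
      ((1 + σ) * a1F σ =
          -((k : ℂ)^2 * σ + (k : ℂ)^2 * (2 + (k : ℂ)^2)) * (l₀ : ℂ) * (σ + 1) / (σ - (k : ℂ)^2) * 1
            - (2 * (k : ℂ) * (l₀ : ℂ) * (1 + (k : ℂ)^2) / (σ - (k : ℂ)^2)) * (σ + 1)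
                * ((k : ℂ) * (q : ℂ) / σ) ∧
        ((q : ℂ) + σ) * A1F σ + (k : ℂ) * a1F σ
          = (k : ℂ)^2 * (l₀ : ℂ) * ((k : ℂ) * (q : ℂ) / σ))) ∧
    (∀ σ : ℂ, σ ≠ 0 → σ ≠ (k : ℂ)^2 → σ ≠ -(q : ℂ) → 1 + σ ≠ 0 →
      ∀ a₁ A₁ : ℂ,
        (1 + σ) * a₁ =
          -((k : ℂ)^2 * σ + (k : ℂ)^2 * (2 + (k : ℂ)^2)) * (l₀ : ℂ) * (σ + 1) / (σ - (k : ℂ)^2) * 1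
            - (2 * (k : ℂ) * (l₀ : ℂ) * (1 + (k : ℂ)^2) / (σ - (k : ℂ)^2)) * (σ + 1)
                * ((k : ℂ) * (q : ℂ) / σ) →
        ((q : ℂ) + σ) * A₁ + (k : ℂ) * a₁
          = (k : ℂ)^2 * (l₀ : ℂ) * ((k : ℂ) * (q : ℂ) / σ) →
        a₁ = a1F σ ∧ A₁ = A1F σ) ∧
    DifferentiableOn ℂ a1F {σ : ℂ | -1 - β ≤ σ.re ∧ σ.re ≤ -β} ∧
    DifferentiableOn ℂ A1F {σ : ℂ | -1 - β ≤ σ.re ∧ σ.re ≤ -β} := by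
  intro a1F A1F
  have hqC : (q : ℂ) = 1 - (k : ℂ)^2 := by rw [hq]; push_cast; ring
  have key : ∀ σ : ℂ, σ ≠ 0 → σ ≠ (k : ℂ)^2 → σ ≠ -(q : ℂ) →
      ((1 + σ) * a1F σ =
          -((k : ℂ)^2 * σ + (k : ℂ)^2 * (2 + (k : ℂ)^2)) * (l₀ : ℂ) * (σ + 1) / (σ - (k : ℂ)^2) * 1
            - (2 * (k : ℂ) * (l₀ : ℂ) * (1 + (k : ℂ)^2) / (σ - (k : ℂ)^2)) * (σ + 1)
                * ((k : ℂ) * (q : ℂ) / σ) ∧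
        ((q : ℂ) + σ) * A1F σ + (k : ℂ) * a1F σ
          = (k : ℂ)^2 * (l₀ : ℂ) * ((k : ℂ) * (q : ℂ) / σ)) := by
    intro σ h0 hkσ hqσ
    have hd : σ - (k : ℂ)^2 ≠ 0 := sub_ne_zero.mpr hkσ
    constructor
    · simp only [a1F]
      field_simp
      ring
    · simp only [a1F, A1F]
      rw [hqC]
      field_simp
      ring
  refine ⟨key, ?_, ?_, ?_⟩
  · intro σ h0 hkσ hqσ h1σ a₁ A₁ e1 e2
    obtain ⟨k1, k2⟩ := key σ h0 hkσ hqσ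
    have ha : a₁ = a1F σ := mul_left_cancel₀ h1σ (e1.trans k1.symm)
    refine ⟨ha, ?_⟩
    have hqs : (q : ℂ) + σ ≠ 0 := by
      intro h
      exact hqσ (by linear_combination h)
    apply mul_left_cancel₀ hqs
    have : ((q : ℂ) + σ) * A₁ = ((q : ℂ) + σ) * A1F σ := by
      have := e2
      rw [ha] at this
      linear_combination this - k2
    exact this
  · apply DifferentiableOn.sub
    · apply DifferentiableOn.div
      · fun_prop
      · fun_prop
      · intro σ hσ
        intro h
        have : σ.re = (k:ℝ)^2 := by
          have := congrArg Complex.re (sub_eq_zero.mp h)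
          rw [this]; simp [← Complex.ofReal_pow]
        have h2 : σ.re ≤ -β := hσ.2
        nlinarith [hβ.1, sq_nonneg k]
    · apply DifferentiableOn.div
      · fun_prop
      · fun_prop
      · intro σ hσ
        intro h
        rcases mul_eq_zero.mp h with h | h
        · have : σ.re = (k:ℝ)^2 := by
            have := congrArg Complex.re (sub_eq_zero.mp h)
            rw [this]; simp [← Complex.ofReal_pow]
          nlinarith [hσ.2, hβ.1, sq_nonneg k]
        · have : σ.re = 0 := by rw [h]; simp
          nlinarith [hσ.2, hβ.1]
  · apply DifferentiableOn.div
    · fun_prop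
    · fun_prop
    · intro σ hσ
      intro h
      rcases mul_eq_zero.mp h with h | h
      · have : σ.re = (k:ℝ)^2 := by
          have := congrArg Complex.re (sub_eq_zero.mp h)
          rw [this]; simp [← Complex.ofReal_pow]
        nlinarith [hσ.2, hβ.1, sq_nonneg k]
      · have : σ.re = 0 := by rw [h]; simp
        nlinarith [hσ.2, hβ.1]
end
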